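/- arXiv:dg-ga/9609012 — 5 statements merged into one kernel-verified Lean document; each statement's English description precedes it below -/
import Mathlib

section
/- With notation as above (two symplectic bases of (V,ω) with ω(2,1) invertible), the following identity of g×g matrices holds: ω(2^⊥,1^⊥) = transpose(ω(2,1)^{-1}) + ω(2^⊥,1) ω(2,1)^{-1} ω(2,1^⊥), where ω(a,b)_{ij} are the pairings of the respective basis vectors. -/
/-- For two symplectic bases `(W₁ᵢ ; W₁ᵢ^⊥)`, `(W₂ᵢ ; W₂ᵢ^⊥)` of a real
symplectic vector space `(V, ω)` with `ω(2,1)` invertible, one has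
`ω(2^⊥,1^⊥) = ᵗ(ω(2,1)⁻¹) + ω(2^⊥,1) ω(2,1)⁻¹ ω(2,1^⊥)`. -/
theorem stmt_2 (g : ℕ) (V : Type*) [AddCommGroup V] [Module ℝ V]
    (ω : V →ₗ[ℝ] V →ₗ[ℝ] ℝ) (halt : ∀ v : V, ω v v = 0)
    (b1 b2 : Module.Basis (Fin g ⊕ Fin g) ℝ V)
    (h1a : ∀ i j, ω (b1 (Sum.inl i)) (b1 (Sum.inl j)) = 0)
    (h1b : ∀ i j, ω (b1 (Sum.inr i)) (b1 (Sum.inr j)) = 0)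
    (h1c : ∀ i j, ω (b1 (Sum.inl i)) (b1 (Sum.inr j)) = if i = j then 1 else 0)
    (h2a : ∀ i j, ω (b2 (Sum.inl i)) (b2 (Sum.inl j)) = 0)
    (h2b : ∀ i j, ω (b2 (Sum.inr i)) (b2 (Sum.inr j)) = 0)
    (h2c : ∀ i j, ω (b2 (Sum.inl i)) (b2 (Sum.inr j)) = if i = j then 1 else 0)
    (M21 M2p1 M21p M2p1p : Matrix (Fin g) (Fin g) ℝ)
    (hM21 : ∀ i j, M21 i j = ω (b2 (Sum.inl i)) (b1 (Sum.inl j)))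
    (hM2p1 : ∀ i j, M2p1 i j = ω (b2 (Sum.inr i)) (b1 (Sum.inl j)))
    (hM21p : ∀ i j, M21p i j = ω (b2 (Sum.inl i)) (b1 (Sum.inr j)))
    (hM2p1p : ∀ i j, M2p1p i j = ω (b2 (Sum.inr i)) (b1 (Sum.inr j)))
    (hinv : IsUnit M21.det) :
    M2p1p = (M21⁻¹).transpose + M2p1 * M21⁻¹ * M21p := by
  -- skew-symmetry
  have skew : ∀ u v : V, ω u v = - ω v u := by
    intro u v
    have h := halt (u + v)
    simp only [map_add, LinearMap.add_apply, halt u, halt v] at h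
    linarith
  -- coordinates of any vector in basis b1, via ω-pairings
  have reprl : ∀ (v : V) (m : Fin g), b1.repr v (Sum.inl m) = ω v (b1 (Sum.inr m)) := by
    intro v m
    conv_rhs => rw [← b1.sum_repr v]
    rw [map_sum]
    simp only [map_smul, LinearMap.smul_apply, LinearMap.sum_apply, smul_eq_mul]
    rw [Fintype.sum_sum_type]
    simp only [h1c, h1b, mul_ite, mul_one, mul_zero]
    simp [Finset.sum_ite_eq']
  have reprr : ∀ (v : V) (m : Fin g), b1.repr v (Sum.inr m) = - ω v (b1 (Sum.inl m)) := by
    intro v m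
    conv_rhs => rw [← b1.sum_repr v]
    rw [map_sum]
    simp only [map_smul, LinearMap.smul_apply, LinearMap.sum_apply, smul_eq_mul]
    rw [Fintype.sum_sum_type]
    have h1c' : ∀ i j : Fin g, ω (b1 (Sum.inr i)) (b1 (Sum.inl j)) = if i = j then -1 else 0 := by
      intro i j
      rw [skew, h1c j i]
      split_ifs with h h' h'
      · simp
      · exact absurd h.symm h'
      · exact absurd h'.symm h
      · simp
    simp only [h1a, h1c', mul_ite, mul_one, mul_zero]
    simp [Finset.sum_ite_eq']
  -- key identity
  have key : ∀ x y : Fin g ⊕ Fin g, ω (b2 x) (b2 y) =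
      ∑ k : Fin g, (ω (b2 x) (b1 (Sum.inl k)) * ω (b2 y) (b1 (Sum.inr k))
        - ω (b2 x) (b1 (Sum.inr k)) * ω (b2 y) (b1 (Sum.inl k))) := by
    intro x y
    conv_lhs => rw [← b1.sum_repr (b2 y), map_sum]
    simp only [map_smul, smul_eq_mul]
    rw [Fintype.sum_sum_type]
    have : ∀ k : Fin g,
        b1.repr (b2 y) (Sum.inl k) * ω (b2 x) (b1 (Sum.inl k)) =
          ω (b2 y) (b1 (Sum.inr k)) * ω (b2 x) (b1 (Sum.inl k)) := by
      intro k; rw [reprl]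
    rw [Finset.sum_congr rfl fun k _ => this k]
    have : ∀ k : Fin g,
        b1.repr (b2 y) (Sum.inr k) * ω (b2 x) (b1 (Sum.inr k)) =
          - (ω (b2 y) (b1 (Sum.inl k)) * ω (b2 x) (b1 (Sum.inr k))) := by
      intro k; rw [reprr]; ring
    rw [Finset.sum_congr rfl fun k _ => this k]
    rw [← Finset.sum_add_distrib]
    apply Finset.sum_congr rfl
    intro k _
    ring
  -- matrix relation E1 : M21 * M2p1pᵀ - M21p * M2p1ᵀ = 1
  have E1 : M21 * M2p1p.transpose - M21p * M2p1.transpose = 1 := by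
    ext i j
    have hk := key (Sum.inl i) (Sum.inr j)
    rw [h2c] at hk
    simp only [Matrix.sub_apply, Matrix.mul_apply, Matrix.transpose_apply, Matrix.one_apply]
    rw [← Finset.sum_sub_distrib]
    rw [hk]
    apply Finset.sum_congr rfl
    intro k _
    rw [hM21, hM2p1p, hM21p, hM2p1]
  -- matrix relation E0 : M21 * M21pᵀ = M21p * M21ᵀ
  have E0 : M21 * M21p.transpose = M21p * M21.transpose := by
    have : M21 * M21p.transpose - M21p * M21.transpose = 0 := by
      ext i j
      have hk := key (Sum.inl i) (Sum.inl j)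
      rw [h2a] at hk
      simp only [Matrix.sub_apply, Matrix.mul_apply, Matrix.transpose_apply, Matrix.zero_apply]
      rw [← Finset.sum_sub_distrib]
      calc ∑ k : Fin g, (M21 i k * M21p j k - M21p i k * M21 j k)
          = ∑ k : Fin g, ((ω (b2 (Sum.inl i))) (b1 (Sum.inl k)) * (ω (b2 (Sum.inl j))) (b1 (Sum.inr k)) -
              (ω (b2 (Sum.inl i))) (b1 (Sum.inr k)) * (ω (b2 (Sum.inl j))) (b1 (Sum.inl k))) := by
            apply Finset.sum_congr rfl
            intro k _
            rw [hM21, hM21p, hM21p, hM21]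
        _ = 0 := hk.symm
    linear_combination (norm := noncomm_ring) this
  -- final algebra
  set N := M21⁻¹ with hN
  have hl : N * M21 = 1 := Matrix.nonsing_inv_mul _ hinv
  have hr : M21 * N = 1 := Matrix.mul_nonsing_inv _ hinv
  have hrT : M21.transpose * N.transpose = 1 := by
    rw [← Matrix.transpose_mul, hl, Matrix.transpose_one]
  have hlT : N.transpose * M21.transpose = 1 := by
    rw [← Matrix.transpose_mul, hr, Matrix.transpose_one]
  -- symmetry of N * M21p
  have sym : M21p.transpose * N.transpose = N * M21p := by
    have h := congrArg (fun X => N * X * N.transpose) E0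
    rw [← Matrix.mul_assoc, ← Matrix.mul_assoc, hl, Matrix.one_mul] at h
    rw [Matrix.mul_assoc (N * M21p) M21.transpose N.transpose, hrT, Matrix.mul_one] at h
    exact h
  -- from E1 : M2p1pᵀ = N + N * M21p * M2p1ᵀ
  have hT : M2p1p.transpose = N + N * M21p * M2p1.transpose := by
    have h1 : M21 * M2p1p.transpose = 1 + M21p * M2p1.transpose := by
      linear_combination (norm := noncomm_ring) E1
    calc M2p1p.transpose = (N * M21) * M2p1p.transpose := by rw [hl, Matrix.one_mul]
      _ = N * (M21 * M2p1p.transpose) := by rw [Matrix.mul_assoc]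
      _ = N * (1 + M21p * M2p1.transpose) := by rw [h1]
      _ = N + N * M21p * M2p1.transpose := by
          rw [Matrix.mul_add, Matrix.mul_one, Matrix.mul_assoc]
  have := congrArg Matrix.transpose hT
  rw [Matrix.transpose_transpose, Matrix.transpose_add, Matrix.transpose_mul,
    Matrix.transpose_mul, Matrix.transpose_transpose, sym] at this
  rw [this, Matrix.mul_assoc]
end

section
/- If L₁ and L₃ are transverse Lagrangian subspaces of a symplectic vector space (V,ω) (so V = L₁ ⊕ L₃), and p₃₁ : V → L₃ denotes the projection onto L₃ along L₁, then the Maslov-Kashiwara index τ(L₁, L₂, L₃) equals the signature of the quadratic form H(x₂) = ω(x₂, p₃₁ x₂) on L₂, for any Lagrangian subspace L₂. -/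
set_option maxHeartbeats 2000000

/-- The maximal dimension of a subspace on which the quadratic map `q` is positive. -/
noncomputable def posIdx {W : Type*} [AddCommGroup W] [Module ℝ W] (q : W → ℝ) : ℕ :=
  sSup {n : ℕ | ∃ U : Submodule ℝ W, Module.finrank ℝ U = n ∧
    ∀ x : W, x ∈ U → x ≠ 0 → 0 < q x}

/-- The signature (positive index minus negative index) of a quadratic map `q`. -/
noncomputable def qSignature {W : Type*} [AddCommGroup W] [Module ℝ W] (q : W → ℝ) : ℤ :=
  (posIdx q : ℤ) - (posIdx (fun x => -q x) : ℤ)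

/-- The Maslov-Kashiwara index of a triple of (Lagrangian) subspaces: the signature of
the quadratic form `G(x₁⊕x₂⊕x₃) = ω(x₁,x₂) + ω(x₂,x₃) + ω(x₃,x₁)` on `L₁ ⊕ L₂ ⊕ L₃`. -/
noncomputable def maslovIndex {V : Type*} [AddCommGroup V] [Module ℝ V]
    (ω : V →ₗ[ℝ] V →ₗ[ℝ] ℝ) (L₁ L₂ L₃ : Submodule ℝ V) : ℤ :=
  qSignature (fun x : ↥L₁ × ↥L₂ × ↥L₃ =>
    ω (x.1 : V) (x.2.1 : V) + ω (x.2.1 : V) (x.2.2 : V) + ω (x.2.2 : V) (x.1 : V))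

/-- A Lagrangian subspace: isotropic of half the dimension of `V`. -/
def IsLagrangianSub {V : Type*} [AddCommGroup V] [Module ℝ V]
    (ω : V →ₗ[ℝ] V →ₗ[ℝ] ℝ) (L : Submodule ℝ V) : Prop :=
  (∀ x ∈ L, ∀ y ∈ L, ω x y = 0) ∧ 2 * Module.finrank ℝ L = Module.finrank ℝ V

open Module

section PosIdxLemmas

variable {W : Type*} [AddCommGroup W] [Module ℝ W] [FiniteDimensional ℝ W]

lemma posIdx_set_bdd (q : W → ℝ) : BddAbove {n : ℕ | ∃ U : Submodule ℝ W,
    Module.finrank ℝ U = n ∧ ∀ x : W, x ∈ U → x ≠ 0 → 0 < q x} :=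
  ⟨finrank ℝ W, fun _ ⟨U, hU, _⟩ => hU ▸ U.finrank_le⟩

omit [FiniteDimensional ℝ W] in
lemma posIdx_set_nonempty (q : W → ℝ) : {n : ℕ | ∃ U : Submodule ℝ W,
    Module.finrank ℝ U = n ∧ ∀ x : W, x ∈ U → x ≠ 0 → 0 < q x}.Nonempty :=
  ⟨0, ⊥, finrank_bot ℝ W, fun _ hx hx0 => absurd (Submodule.mem_bot ℝ |>.1 hx) hx0⟩

lemma le_posIdx (q : W → ℝ) (U : Submodule ℝ W) (h : ∀ x : W, x ∈ U → x ≠ 0 → 0 < q x) :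
    finrank ℝ U ≤ posIdx q :=
  le_csSup (posIdx_set_bdd q) ⟨U, rfl, h⟩

lemma posIdx_spec (q : W → ℝ) : ∃ U : Submodule ℝ W, finrank ℝ U = posIdx q ∧
    ∀ x : W, x ∈ U → x ≠ 0 → 0 < q x :=
  Nat.sSup_mem (posIdx_set_nonempty q) (posIdx_set_bdd q)

lemma posIdx_add_le (q : W → ℝ) (N : Submodule ℝ W) (hN : ∀ x ∈ N, q x ≤ 0) :
    posIdx q + finrank ℝ N ≤ finrank ℝ W := by
  obtain ⟨U, hU, hUpos⟩ := posIdx_spec q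
  have hdisj : U ⊓ N = ⊥ := by
    rw [Submodule.eq_bot_iff]
    rintro x ⟨hxU, hxN⟩
    by_contra hx0
    exact absurd (hN x hxN) (not_le.2 (hUpos x hxU hx0))
  have := Submodule.finrank_sup_add_finrank_inf_eq U N
  rw [hdisj, finrank_bot, add_zero] at this
  calc posIdx q + finrank ℝ N = finrank ℝ U + finrank ℝ N := by rw [hU]
    _ = finrank ℝ ↥(U ⊔ N) := this.symm
    _ ≤ finrank ℝ W := Submodule.finrank_le _

end PosIdxLemmas

lemma sign_decomp {W : Type*} [AddCommGroup W] [Module ℝ W] [FiniteDimensional ℝ W]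
    (B : LinearMap.BilinForm ℝ W) (hs : B.IsSymm) :
    ∃ P N P' N' : Submodule ℝ W,
      finrank ℝ P + finrank ℝ N' = finrank ℝ W ∧
      finrank ℝ N + finrank ℝ P' = finrank ℝ W ∧
      (∀ x ∈ P, x ≠ 0 → 0 < B x x) ∧ (∀ x ∈ N, x ≠ 0 → B x x < 0) ∧
      (∀ x ∈ P', 0 ≤ B x x) ∧ (∀ x ∈ N', B x x ≤ 0) := by
  obtain ⟨v, hv⟩ := LinearMap.BilinForm.exists_orthogonal_basis (LinearMap.BilinForm.isSymm_iff.1 hs)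
  have hdiag2 : ∀ (x : W) (j : Fin (finrank ℝ W)),
      B x (v j) = v.repr x j * B (v j) (v j) := by
    intro x j
    nth_rewrite 1 [← v.sum_repr x]
    rw [map_sum, LinearMap.sum_apply]
    simp only [map_smul, LinearMap.smul_apply, smul_eq_mul]
    rw [Finset.sum_eq_single j (fun i _ hi => by rw [hv hi, mul_zero])
      (fun h => absurd (Finset.mem_univ j) h)]
  have hdiag : ∀ x : W, B x x = ∑ i, v.repr x i * v.repr x i * B (v i) (v i) := by
    intro x
    nth_rewrite 2 [← v.sum_repr x]
    rw [map_sum]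
    simp only [map_smul, smul_eq_mul]
    exact Finset.sum_congr rfl fun j _ => by rw [hdiag2, mul_assoc]
  have hspan_rank : ∀ s : Finset (Fin (finrank ℝ W)),
      finrank ℝ (Submodule.span ℝ (v '' ↑s)) = s.card := by
    intro s
    rw [Set.image_eq_range]
    have := finrank_span_eq_card (R := ℝ)
      (v.linearIndependent.comp (Subtype.val : ↥(↑s : Set (Fin (finrank ℝ W))) → _)
        Subtype.val_injective)
    simpa [Function.comp_def] using this
  have hmem : ∀ (s : Finset (Fin (finrank ℝ W))) (x : W),
      x ∈ Submodule.span ℝ (v '' ↑s) → ∀ i, i ∉ s → v.repr x i = 0 := by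
    intro s x hx i hi
    by_contra h
    exact hi (Finset.mem_coe.1 (v.mem_span_image.1 hx (Finsupp.mem_support_iff.2 h)))
  have key : ∀ (pred : Fin (finrank ℝ W) → Prop) (_ : DecidablePred pred),
      ∀ x ∈ Submodule.span ℝ (v '' ↑(Finset.univ.filter pred)),
        B x x = ∑ i ∈ Finset.univ.filter pred, v.repr x i * v.repr x i * B (v i) (v i) := by
    intro pred _ x hx
    rw [hdiag]
    refine (Finset.sum_subset (Finset.subset_univ _) fun i _ hi => ?_).symm
    rw [hmem _ x hx i hi, zero_mul, zero_mul]
  classical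
  refine ⟨Submodule.span ℝ (v '' ↑(Finset.univ.filter fun i => 0 < B (v i) (v i))),
    Submodule.span ℝ (v '' ↑(Finset.univ.filter fun i => B (v i) (v i) < 0)),
    Submodule.span ℝ (v '' ↑(Finset.univ.filter fun i => ¬ B (v i) (v i) < 0)),
    Submodule.span ℝ (v '' ↑(Finset.univ.filter fun i => ¬ 0 < B (v i) (v i))),
    ?_, ?_, ?_, ?_, ?_, ?_⟩
  · rw [hspan_rank, hspan_rank, Finset.card_filter_add_card_filter_not, Finset.card_univ,
      Fintype.card_fin]
  · rw [hspan_rank, hspan_rank, Finset.card_filter_add_card_filter_not, Finset.card_univ,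
      Fintype.card_fin]
  · intro x hx hx0
    rw [key _ _ x hx]
    have hrepr : ∃ i, v.repr x i ≠ 0 := by
      by_contra h
      push_neg at h
      exact hx0 (v.repr.map_eq_zero_iff.1 (Finsupp.ext h))
    obtain ⟨i, hi⟩ := hrepr
    have himem : i ∈ Finset.univ.filter fun i => 0 < B (v i) (v i) := by
      by_contra h
      exact hi (hmem _ x hx i h)
    refine Finset.sum_pos' (fun j hj => ?_) ⟨i, himem, ?_⟩
    · exact mul_nonneg (mul_self_nonneg _) (le_of_lt (Finset.mem_filter.1 hj).2)
    · exact mul_pos (mul_self_pos.2 hi) (Finset.mem_filter.1 himem).2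
  · intro x hx hx0
    rw [key _ _ x hx]
    have hrepr : ∃ i, v.repr x i ≠ 0 := by
      by_contra h
      push_neg at h
      exact hx0 (v.repr.map_eq_zero_iff.1 (Finsupp.ext h))
    obtain ⟨i, hi⟩ := hrepr
    have himem : i ∈ Finset.univ.filter fun i => B (v i) (v i) < 0 := by
      by_contra h
      exact hi (hmem _ x hx i h)
    refine Finset.sum_neg' (fun j hj => ?_) ⟨i, himem, ?_⟩
    · exact mul_nonpos_of_nonneg_of_nonpos (mul_self_nonneg _)
        (le_of_lt (Finset.mem_filter.1 hj).2)
    · exact mul_neg_of_pos_of_neg (mul_self_pos.2 hi) (Finset.mem_filter.1 himem).2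
  · intro x hx
    rw [key _ _ x hx]
    exact Finset.sum_nonneg fun j hj => mul_nonneg (mul_self_nonneg _)
      (not_lt.1 (Finset.mem_filter.1 hj).2)
  · intro x hx
    rw [key _ _ x hx]
    exact Finset.sum_nonpos fun j hj => mul_nonpos_of_nonneg_of_nonpos (mul_self_nonneg _)
      (not_lt.1 (Finset.mem_filter.1 hj).2)

lemma aux_exists {V : Type*} [AddCommGroup V] [Module ℝ V] [FiniteDimensional ℝ V]
    (ω : V →ₗ[ℝ] V →ₗ[ℝ] ℝ)
    (hskew : ∀ v w : V, ω v w + ω w v = 0)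
    (L₁ L₂ L₃ : Submodule ℝ V)
    (hL1 : ∀ x ∈ L₁, ∀ y ∈ L₁, ω x y = 0) (hL3 : ∀ x ∈ L₃, ∀ y ∈ L₃, ω x y = 0)
    (p : V →ₗ[ℝ] V) (hp : ∀ x : V, p x ∈ L₃ ∧ x - p x ∈ L₁)
    (φ : ↥L₁ →ₗ[ℝ] V) (hφ3 : ∀ x, φ x ∈ L₃)
    (S : Submodule ℝ ↥L₂) (c : ℝ) :
    ∃ U : Submodule ℝ (↥L₁ × ↥L₂ × ↥L₃),
      finrank ℝ ↥U = finrank ℝ ↥L₁ + finrank ℝ ↥S ∧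
      ∀ z : ↥L₁ × ↥L₂ × ↥L₃, z ∈ U →
        ∃ (x₁ : ↥L₁) (x₂ : ↥L₂), x₂ ∈ S ∧ (z ≠ 0 → ¬(x₁ = 0 ∧ x₂ = 0)) ∧
        ω (z.1 : V) (z.2.1 : V) + ω (z.2.1 : V) (z.2.2 : V) + ω (z.2.2 : V) (z.1 : V)
          = ω (x₂ : V) (p (x₂ : V)) + c * ω (x₁ : V) (φ x₁) := by
  let j : ↥S →ₗ[ℝ] ↥L₂ := S.subtype
  let fst := LinearMap.fst ℝ ↥L₁ ↥S
  let snd := LinearMap.snd ℝ ↥L₁ ↥S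
  let m₁ : ↥L₁ × ↥S →ₗ[ℝ] V :=
    L₁.subtype ∘ₗ fst + (LinearMap.id - p) ∘ₗ L₂.subtype ∘ₗ j ∘ₗ snd
  let m₃ : ↥L₁ × ↥S →ₗ[ℝ] V := p ∘ₗ L₂.subtype ∘ₗ j ∘ₗ snd - c • (φ ∘ₗ fst)
  have hm₁ : ∀ z, m₁ z ∈ L₁ := fun z => add_mem (z.1).2 (hp _).2
  have hm₃ : ∀ z, m₃ z ∈ L₃ := fun z =>
    sub_mem (hp _).1 (Submodule.smul_mem _ _ (hφ3 _))
  let T : ↥L₁ × ↥S →ₗ[ℝ] ↥L₁ × ↥L₂ × ↥L₃ :=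
    (LinearMap.codRestrict L₁ m₁ hm₁).prod
      ((j ∘ₗ snd).prod (LinearMap.codRestrict L₃ m₃ hm₃))
  have hTval : ∀ w : ↥L₁ × ↥S,
      (((T w).1 : V) = m₁ w) ∧ ((T w).2.1 = j w.2) ∧ (((T w).2.2 : V) = m₃ w) :=
    fun w => ⟨rfl, rfl, rfl⟩
  have hm₁val : ∀ w : ↥L₁ × ↥S, m₁ w = (w.1 : V) + ((j w.2 : V) - p (j w.2 : V)) := by
    intro w; rfl
  have hm₃val : ∀ w : ↥L₁ × ↥S, m₃ w = p (j w.2 : V) - c • φ w.1 := by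
    intro w; rfl
  have hinj : Function.Injective T := by
    rw [← LinearMap.ker_eq_bot, Submodule.eq_bot_iff]
    intro w hw
    rw [LinearMap.mem_ker] at hw
    have h2 : j w.2 = 0 := congrArg (fun z => z.2.1) hw
    have hw2 : w.2 = 0 := Submodule.injective_subtype S (by rw [map_zero]; exact h2)
    have h1 : m₁ w = 0 := by
      have := congrArg (fun z : ↥L₁ × ↥L₂ × ↥L₃ => (z.1 : V)) hw
      simpa [hTval w] using this
    rw [hm₁val w, h2] at h1
    simp only [ZeroMemClass.coe_zero, map_zero, sub_zero, add_zero] at h1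
    have hw1 : w.1 = 0 := Subtype.ext h1
    exact Prod.ext hw1 hw2
  refine ⟨LinearMap.range T, ?_, ?_⟩
  · rw [LinearMap.finrank_range_of_inj hinj, Module.finrank_prod]
  · rintro z ⟨w, rfl⟩
    refine ⟨w.1, j w.2, (w.2).2, ?_, ?_⟩
    · intro hz h
      obtain ⟨h1, h2⟩ := h
      apply hz
      have hw2 : w.2 = 0 := Submodule.injective_subtype S (by rw [map_zero]; exact h2)
      have : w = 0 := Prod.ext h1 hw2
      rw [this, map_zero]
    · have e1 : ((T w).1 : V) = (w.1 : V) + ((j w.2 : V) - p (j w.2 : V)) :=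
        (hTval w).1.trans (hm₁val w)
      have e2 : (((T w).2.1 : ↥L₂) : V) = (j w.2 : V) := by rw [(hTval w).2.1]
      have e3 : ((T w).2.2 : V) = p (j w.2 : V) - c • φ w.1 :=
        (hTval w).2.2.trans (hm₃val w)
      rw [e1, e2, e3]
      set x₁ : V := (w.1 : V) with hx₁
      set X : V := (j w.2 : V) with hX0
      set f : V := φ w.1 with hf
      set b : V := p X with hb
      set a : V := X - b with ha
      have hX : X = a + b := by rw [ha]; abel
      rw [hX]
      have hωx₁a : ω x₁ a = 0 := hL1 _ (w.1).2 _ (hp X).2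
      have hωaa : ω a a = 0 := hL1 _ (hp X).2 _ (hp X).2
      have hωbf : ω b f = 0 := hL3 _ (hp X).1 _ (hφ3 w.1)
      simp only [map_add, map_sub, map_smul, LinearMap.add_apply, LinearMap.sub_apply,
        LinearMap.smul_apply, smul_eq_mul]
      linear_combination hωx₁a + hωaa + hskew x₁ b + hskew a b - c * hωbf
        - c * hskew a f - c * hskew x₁ f

/-- If `L₁` and `L₃` are transverse Lagrangians and `p₃₁` is the
projection onto `L₃` along `L₁`, then `τ(L₁,L₂,L₃)` is the signature of the quadratic
form `x₂ ↦ ω(x₂, p₃₁ x₂)` on `L₂`. -/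
theorem stmt_7 (V : Type*) [AddCommGroup V] [Module ℝ V] [FiniteDimensional ℝ V]
    (ω : V →ₗ[ℝ] V →ₗ[ℝ] ℝ) (halt : ∀ v : V, ω v v = 0)
    (hnd : ∀ v : V, (∀ w : V, ω v w = 0) → v = 0)
    (L₁ L₂ L₃ : Submodule ℝ V)
    (h1 : IsLagrangianSub ω L₁) (h2 : IsLagrangianSub ω L₂) (h3 : IsLagrangianSub ω L₃)
    (htrans : L₁ ⊓ L₃ = ⊥ ∧ L₁ ⊔ L₃ = ⊤)
    (p : V →ₗ[ℝ] V) (hp : ∀ x : V, p x ∈ L₃ ∧ x - p x ∈ L₁) :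
    maslovIndex ω L₁ L₂ L₃ = qSignature (fun x : ↥L₂ => ω (x : V) (p (x : V))) := by
  obtain ⟨h1i, h1d⟩ := h1
  obtain ⟨h2i, h2d⟩ := h2
  obtain ⟨h3i, h3d⟩ := h3
  have hskew : ∀ v w : V, ω v w + ω w v = 0 := by
    intro v w
    have := halt (v + w)
    simp only [map_add, LinearMap.add_apply, halt v, halt w] at this
    linarith
  -- the dual pairing ψ : L₃ → L₁*
  set ψ : ↥L₃ →ₗ[ℝ] Module.Dual ℝ ↥L₁ := (ω.flip.compl₂ L₁.subtype).comp L₃.subtype with hψdef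
  have hψ : ∀ (z : ↥L₃) (x : ↥L₁), ψ z x = ω (x : V) (z : V) := fun z x => rfl
  have hψinj : Function.Injective ψ := by
    rw [← LinearMap.ker_eq_bot, Submodule.eq_bot_iff]
    intro z hz
    rw [LinearMap.mem_ker] at hz
    have hz' : ∀ x : ↥L₁, ω (x : V) (z : V) = 0 := by
      intro x
      rw [← hψ z x, hz]
      rfl
    have : (z : V) = 0 := by
      apply hnd
      intro w
      have hw : w ∈ L₁ ⊔ L₃ := htrans.2 ▸ Submodule.mem_top
      obtain ⟨u, hu, t, ht, rfl⟩ := Submodule.mem_sup.1 hw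
      have e1 : ω (z : V) u = 0 := by
        linarith [hz' ⟨u, hu⟩, hskew u (z : V)]
      have e2 : ω (z : V) t = 0 := h3i _ z.2 _ ht
      rw [map_add, e1, e2, add_zero]
    exact Subtype.ext this
  have hrank13 : finrank ℝ ↥L₃ = finrank ℝ (Module.Dual ℝ ↥L₁) := by
    rw [Subspace.dual_finrank_eq]
    omega
  have hψsurj : Function.Surjective ψ :=
    (LinearMap.injective_iff_surjective_of_finrank_eq_finrank hrank13).1 hψinj
  let ψe : ↥L₃ ≃ₗ[ℝ] Module.Dual ℝ ↥L₁ := LinearEquiv.ofBijective ψ ⟨hψinj, hψsurj⟩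
  let e : Basis (Fin (finrank ℝ ↥L₁)) ℝ ↥L₁ := finBasis ℝ ↥L₁
  let φ : ↥L₁ →ₗ[ℝ] V := L₃.subtype ∘ₗ (ψe.symm.toLinearMap ∘ₗ e.toDual)
  have hφ3 : ∀ x : ↥L₁, φ x ∈ L₃ := fun x => (ψe.symm (e.toDual x)).2
  have hφval : ∀ x y : ↥L₁, ω (y : V) (φ x) = e.toDual x y := by
    intro x y
    have h' : φ x = ((ψe.symm (e.toDual x) : ↥L₃) : V) := rfl
    rw [h', ← hψ (ψe.symm (e.toDual x)) y]
    have h'' : ψ (ψe.symm (e.toDual x)) = e.toDual x := ψe.apply_symm_apply _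
    rw [h'']
  have hdual : ∀ x : ↥L₁, e.toDual x x = ∑ i, e.repr x i * e.repr x i := by
    intro x
    nth_rewrite 2 [← e.sum_repr x]
    rw [map_sum]
    simp only [map_smul, smul_eq_mul, Basis.toDual_apply_left]
  have hφnonneg : ∀ x : ↥L₁, 0 ≤ ω (x : V) (φ x) := by
    intro x
    rw [hφval, hdual]
    exact Finset.sum_nonneg fun i _ => mul_self_nonneg _
  have hφpos : ∀ x : ↥L₁, x ≠ 0 → 0 < ω (x : V) (φ x) := by
    intro x hx
    rw [hφval, hdual]
    have hrepr : ∃ i, e.repr x i ≠ 0 := by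
      by_contra h
      push_neg at h
      exact hx (e.repr.map_eq_zero_iff.1 (Finsupp.ext h))
    obtain ⟨i, hi⟩ := hrepr
    exact Finset.sum_pos' (fun j _ => mul_self_nonneg _)
      ⟨i, Finset.mem_univ i, mul_self_pos.2 hi⟩
  -- the symmetric bilinear form on L₂
  set Bf : LinearMap.BilinForm ℝ ↥L₂ := ((ω.compl₂ p).compl₂ L₂.subtype).comp L₂.subtype
    with hBfdef
  have hBf : ∀ x y : ↥L₂, Bf x y = ω (x : V) (p (y : V)) := fun x y => rfl
  have hBsymm : Bf.IsSymm := by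
    rw [LinearMap.BilinForm.isSymm_iff, LinearMap.isSymm_def]
    intro x y
    rw [RingHom.id_apply, hBf, hBf]
    set X : V := (x : V) with hX0
    set Y : V := (y : V) with hY0
    set b : V := p X with hb
    set b' : V := p Y with hb'
    set a : V := X - b with ha
    set a' : V := Y - b' with ha'
    have hXab : X = a + b := by rw [ha]; abel
    have hYab : Y = a' + b' := by rw [ha']; abel
    rw [hXab, hYab]
    have h0 : ω (a + b) (a' + b') = 0 := by
      rw [← hXab, ← hYab]; exact h2i _ x.2 _ y.2
    have haa' : ω a a' = 0 := h1i _ (hp X).2 _ (hp Y).2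
    have hb'b : ω b' b = 0 := h3i _ (hp Y).1 _ (hp X).1
    simp only [map_add, LinearMap.add_apply] at h0 ⊢
    linear_combination h0 - haa' - hskew a' b - hb'b
  -- decompose L₂ according to the sign of the form
  obtain ⟨P, N, P', N', hPN', hNP', hP, hN, hP', hN'⟩ := sign_decomp Bf hBsymm
  set Hq : ↥L₂ → ℝ := fun x => ω (x : V) (p (x : V)) with hHqdef
  set Gq : ↥L₁ × ↥L₂ × ↥L₃ → ℝ := fun z =>
    ω (z.1 : V) (z.2.1 : V) + ω (z.2.1 : V) (z.2.2 : V) + ω (z.2.2 : V) (z.1 : V) with hGqdef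
  -- bounds for the quadratic form on L₂
  have hs1 : finrank ℝ ↥P ≤ posIdx Hq := le_posIdx Hq P hP
  have hs2 : posIdx Hq + finrank ℝ ↥N' ≤ finrank ℝ ↥L₂ := posIdx_add_le Hq N' hN'
  have hs3 : finrank ℝ ↥N ≤ posIdx (fun x => -Hq x) :=
    le_posIdx _ N fun x hx h0 => neg_pos.2 (hN x hx h0)
  have hs4 : posIdx (fun x => -Hq x) + finrank ℝ ↥P' ≤ finrank ℝ ↥L₂ :=
    posIdx_add_le _ P' fun x hx => neg_nonpos.2 (hP' x hx)
  -- bounds for the Maslov form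
  obtain ⟨U1, hU1r, hU1⟩ := aux_exists ω hskew L₁ L₂ L₃ h1i h3i p hp φ hφ3 P 1
  have hb1 : finrank ℝ ↥L₁ + finrank ℝ ↥P ≤ posIdx Gq := by
    rw [← hU1r]
    refine le_posIdx Gq U1 fun z hz hz0 => ?_
    obtain ⟨x₁, x₂, hx₂, hne, heq⟩ := hU1 z hz
    show 0 < ω (z.1 : V) (z.2.1 : V) + ω (z.2.1 : V) (z.2.2 : V) + ω (z.2.2 : V) (z.1 : V)
    rw [heq]
    rcases eq_or_ne x₂ 0 with h | h
    · have hx₁ : x₁ ≠ 0 := fun h' => hne hz0 ⟨h', h⟩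
      rw [h]
      simp only [ZeroMemClass.coe_zero, map_zero, LinearMap.zero_apply, one_mul]
      linarith [hφpos x₁ hx₁]
    · have hpos := hP x₂ hx₂ h
      rw [hBf] at hpos
      linarith [hφnonneg x₁]
  obtain ⟨U2, hU2r, hU2⟩ := aux_exists ω hskew L₁ L₂ L₃ h1i h3i p hp φ hφ3 N' (-1)
  have hb2 : posIdx Gq + (finrank ℝ ↥L₁ + finrank ℝ ↥N') ≤
      finrank ℝ (↥L₁ × ↥L₂ × ↥L₃) := by
    rw [← hU2r]
    refine posIdx_add_le Gq U2 fun z hz => ?_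
    obtain ⟨x₁, x₂, hx₂, _, heq⟩ := hU2 z hz
    show ω (z.1 : V) (z.2.1 : V) + ω (z.2.1 : V) (z.2.2 : V) + ω (z.2.2 : V) (z.1 : V) ≤ 0
    rw [heq]
    have hneg := hN' x₂ hx₂
    rw [hBf] at hneg
    linarith [hφnonneg x₁]
  obtain ⟨U3, hU3r, hU3⟩ := aux_exists ω hskew L₁ L₂ L₃ h1i h3i p hp φ hφ3 N (-1)
  have hb3 : finrank ℝ ↥L₁ + finrank ℝ ↥N ≤ posIdx (fun z => -Gq z) := by
    rw [← hU3r]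
    refine le_posIdx _ U3 fun z hz hz0 => ?_
    obtain ⟨x₁, x₂, hx₂, hne, heq⟩ := hU3 z hz
    show 0 < -(ω (z.1 : V) (z.2.1 : V) + ω (z.2.1 : V) (z.2.2 : V) + ω (z.2.2 : V) (z.1 : V))
    rw [heq]
    rcases eq_or_ne x₂ 0 with h | h
    · have hx₁ : x₁ ≠ 0 := fun h' => hne hz0 ⟨h', h⟩
      rw [h]
      simp only [ZeroMemClass.coe_zero, map_zero, LinearMap.zero_apply]
      have := hφpos x₁ hx₁
      linarith
    · have hneg := hN x₂ hx₂ h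
      rw [hBf] at hneg
      linarith [hφnonneg x₁]
  obtain ⟨U4, hU4r, hU4⟩ := aux_exists ω hskew L₁ L₂ L₃ h1i h3i p hp φ hφ3 P' 1
  have hb4 : posIdx (fun z => -Gq z) + (finrank ℝ ↥L₁ + finrank ℝ ↥P') ≤
      finrank ℝ (↥L₁ × ↥L₂ × ↥L₃) := by
    rw [← hU4r]
    refine posIdx_add_le _ U4 fun z hz => ?_
    obtain ⟨x₁, x₂, hx₂, _, heq⟩ := hU4 z hz
    show -(ω (z.1 : V) (z.2.1 : V) + ω (z.2.1 : V) (z.2.2 : V) + ω (z.2.2 : V) (z.1 : V)) ≤ 0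
    rw [heq]
    have hpos := hP' x₂ hx₂
    rw [hBf] at hpos
    linarith [hφnonneg x₁]
  have hWr : finrank ℝ (↥L₁ × ↥L₂ × ↥L₃) =
      finrank ℝ ↥L₁ + (finrank ℝ ↥L₂ + finrank ℝ ↥L₃) := by
    rw [Module.finrank_prod, Module.finrank_prod]
  have hlhs : maslovIndex ω L₁ L₂ L₃ = (posIdx Gq : ℤ) - (posIdx (fun z => -Gq z) : ℤ) := rfl
  have hrhs : qSignature Hq = (posIdx Hq : ℤ) - (posIdx (fun x => -Hq x) : ℤ) := rfl
  rw [hWr] at hb2 hb4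
  show maslovIndex ω L₁ L₂ L₃ = qSignature Hq
  rw [hlhs, hrhs]
  have h13 : finrank ℝ ↥L₁ = finrank ℝ ↥L₃ := by omega
  omega
end

section
/- For any triple L₁, L₂, L₃ of Lagrangian subspaces of a 2g-dimensional symplectic vector space (V,ω), the Maslov-Kashiwara index satisfies the parity congruence τ(L₁, L₂, L₃) ≡ g + dim(L₁ ∩ L₂) + dim(L₂ ∩ L₃) + dim(L₃ ∩ L₁) (mod 2). -/
open Module Finset QuadraticMap

section AuxPosIdx

lemma posIdx_comp_equiv {W W' : Type*} [AddCommGroup W] [Module ℝ W] [AddCommGroup W']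
    [Module ℝ W'] (e : W ≃ₗ[ℝ] W') (q : W' → ℝ) :
    posIdx (fun x => q (e x)) = posIdx q := by
  unfold posIdx
  congr 1
  ext n
  constructor
  · rintro ⟨U, hU, hpos⟩
    refine ⟨U.map (e : W →ₗ[ℝ] W'), (LinearEquiv.finrank_map_eq e U).trans hU, ?_⟩
    rintro x ⟨u, hu, rfl⟩ hx0
    exact hpos u hu (by rintro rfl; simp at hx0)
  · rintro ⟨U, hU, hpos⟩
    refine ⟨U.map (e.symm : W' →ₗ[ℝ] W), (LinearEquiv.finrank_map_eq e.symm U).trans hU, ?_⟩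
    rintro x ⟨u, hu, rfl⟩ hx0
    show 0 < q (e (e.symm u))
    rw [e.apply_symm_apply]
    exact hpos u hu (by rintro rfl; simp at hx0)

/-- extension by zero -/
noncomputable def extZero {n : ℕ} (p : Fin n → Prop) [DecidablePred p] :
    ({i // p i} → ℝ) →ₗ[ℝ] (Fin n → ℝ) where
  toFun y := fun i => if h : p i then y ⟨i, h⟩ else 0
  map_add' y z := by funext i; by_cases h : p i <;> simp [h]
  map_smul' c y := by funext i; by_cases h : p i <;> simp [h]

lemma extZero_injective {n : ℕ} (p : Fin n → Prop) [DecidablePred p] :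
    Function.Injective (extZero p) := by
  intro y z h
  funext j
  have := congrFun h j.1
  simpa [extZero, j.2] using this

lemma posIdx_diag {n : ℕ} (w : Fin n → ℝ) :
    posIdx (fun x : Fin n → ℝ => ∑ i, w i * (x i * x i)) =
      (Finset.univ.filter fun i => 0 < w i).card := by
  classical
  set S := {m : ℕ | ∃ U : Submodule ℝ (Fin n → ℝ), Module.finrank ℝ U = m ∧
    ∀ x : Fin n → ℝ, x ∈ U → x ≠ 0 → 0 < ∑ i, w i * (x i * x i)} with hS
  have hub : ∀ m ∈ S, m ≤ (Finset.univ.filter fun i => 0 < w i).card := by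
    rintro m ⟨U, hU, hpos⟩
    have hinj : Function.Injective
        ((LinearMap.funLeft ℝ ℝ (fun j : {i // 0 < w i} => (j : Fin n))).comp U.subtype) := by
      rw [← LinearMap.ker_eq_bot]
      rw [LinearMap.ker_eq_bot']
      intro u hu
      by_contra h0
      have hq : 0 < ∑ i, w i * (u.1 i * u.1 i) :=
        hpos u.1 u.2 (fun hc => h0 (Subtype.ext hc))
      have hnp : ∑ i, w i * (u.1 i * u.1 i) ≤ 0 := by
        apply Finset.sum_nonpos
        intro i _
        by_cases hi : 0 < w i
        · have : u.1 i = 0 := congrFun hu ⟨i, hi⟩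
          simp [this]
        · exact mul_nonpos_of_nonpos_of_nonneg (le_of_not_gt hi) (mul_self_nonneg _)
      linarith
    have := LinearMap.finrank_le_finrank_of_injective hinj
    rw [hU] at this
    rwa [Module.finrank_fintype_fun_eq_card, Fintype.card_subtype] at this
  have hmem : (Finset.univ.filter fun i => 0 < w i).card ∈ S := by
    refine ⟨LinearMap.range (extZero (fun i => 0 < w i)), ?_, ?_⟩
    · rw [LinearMap.finrank_range_of_inj (extZero_injective _),
        Module.finrank_fintype_fun_eq_card, Fintype.card_subtype]
    · rintro x ⟨y, rfl⟩ hx0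
      obtain ⟨j, hj⟩ : ∃ j, extZero (fun i => 0 < w i) y j ≠ 0 := by
        by_contra hc
        push_neg at hc
        exact hx0 (funext hc)
      have hjp : 0 < w j := by
        by_contra h
        exact hj (dif_neg h)
      apply Finset.sum_pos'
      · intro i _
        by_cases hi : 0 < w i
        · exact mul_nonneg hi.le (mul_self_nonneg _)
        · have : extZero (fun i => 0 < w i) y i = 0 := dif_neg hi
          simp [this]
      · exact ⟨j, Finset.mem_univ j, mul_pos hjp (mul_self_pos.mpr hj)⟩
  have : posIdx (fun x : Fin n → ℝ => ∑ i, w i * (x i * x i)) = sSup S := rfl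
  rw [this]
  exact le_antisymm (csSup_le ⟨_, hmem⟩ hub) (le_csSup ⟨_, hub⟩ hmem)

lemma rad_transfer {W W' : Type*} [AddCommGroup W] [Module ℝ W] [AddCommGroup W']
    [Module ℝ W'] (Q : QuadraticForm ℝ W) (Q' : QuadraticForm ℝ W')
    (e : Q.IsometryEquiv Q') :
    finrank ℝ (LinearMap.ker (polarBilin Q)) = finrank ℝ (LinearMap.ker (polarBilin Q')) := by
  have key : ∀ x y, polar Q' (e x) (e y) = polar Q x y := by
    intro x y
    simp only [polar, ← map_add, e.map_app]
  have hcomap : (LinearMap.ker (polarBilin Q')).comap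
      ((e : W ≃ₗ[ℝ] W') : W →ₗ[ℝ] W') = LinearMap.ker (polarBilin Q) := by
    ext x
    simp only [Submodule.mem_comap, LinearMap.mem_ker, LinearMap.ext_iff,
      LinearMap.zero_apply, polarBilin_apply_apply, LinearEquiv.coe_coe,
      QuadraticMap.IsometryEquiv.coe_toLinearEquiv]
    constructor
    · intro h y
      rw [← key]; exact h (e y)
    · intro h y'
      have hy : e ((e : W ≃ₗ[ℝ] W').symm y') = y' :=
        (e : W ≃ₗ[ℝ] W').apply_symm_apply y'
      rw [← hy, key]
      exact h _
  rw [← hcomap, Submodule.comap_equiv_eq_map_symm, LinearEquiv.finrank_map_eq]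

lemma posIdx_isometry {W W' : Type*} [AddCommGroup W] [Module ℝ W] [AddCommGroup W']
    [Module ℝ W'] (Q : QuadraticForm ℝ W) (Q' : QuadraticForm ℝ W')
    (e : Q.IsometryEquiv Q') : posIdx ⇑Q = posIdx ⇑Q' := by
  have h : (fun x => Q' ((e : W ≃ₗ[ℝ] W') x)) = ⇑Q := by
    funext x
    simp only [LinearEquiv.coe_coe, QuadraticMap.IsometryEquiv.coe_toLinearEquiv]
    exact e.map_app x
  rw [← h]
  exact posIdx_comp_equiv (e : W ≃ₗ[ℝ] W') ⇑Q'

lemma posIdx_neg_isometry {W W' : Type*} [AddCommGroup W] [Module ℝ W] [AddCommGroup W']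
    [Module ℝ W'] (Q : QuadraticForm ℝ W) (Q' : QuadraticForm ℝ W')
    (e : Q.IsometryEquiv Q') :
    posIdx (fun x => -Q x) = posIdx (fun x => -Q' x) := by
  have h : (fun x => (fun y => -Q' y) ((e : W ≃ₗ[ℝ] W') x)) = fun x => -Q x := by
    funext x
    simp only [LinearEquiv.coe_coe, QuadraticMap.IsometryEquiv.coe_toLinearEquiv]
    rw [e.map_app x]
  rw [← h]
  exact posIdx_comp_equiv (e : W ≃ₗ[ℝ] W') (fun y => -Q' y)

lemma rad_diag {n : ℕ} (w : Fin n → ℝ) :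
    finrank ℝ (LinearMap.ker (polarBilin (weightedSumSquares ℝ w))) =
      (Finset.univ.filter fun i => w i = 0).card := by
  classical
  have hpolar : ∀ x y : Fin n → ℝ, polar (weightedSumSquares ℝ w) x y
      = ∑ i, 2 * w i * x i * y i := by
    intro x y
    simp only [polar, weightedSumSquares_apply, smul_eq_mul, Pi.add_apply]
    rw [← Finset.sum_sub_distrib, ← Finset.sum_sub_distrib]
    exact Finset.sum_congr rfl fun i _ => by ring
  have hker : LinearMap.ker (polarBilin (weightedSumSquares ℝ w)) =
      LinearMap.range (extZero (fun i => w i = 0)) := by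
    ext x
    simp only [LinearMap.mem_ker, LinearMap.ext_iff, LinearMap.zero_apply,
      polarBilin_apply_apply, LinearMap.mem_range]
    constructor
    · intro h
      have hx : ∀ i, w i ≠ 0 → x i = 0 := by
        intro i hi
        have h1 := h (Pi.single i 1)
        rw [hpolar] at h1
        have h2 : 2 * w i * x i * 1 = 0 := by
          rw [← h1]
          rw [Finset.sum_eq_single i]
          · simp
          · intro j _ hj; simp [Pi.single_apply, hj]
          · simp
        have h3 : w i * x i = 0 := by linarith [h2]
        rcases mul_eq_zero.mp h3 with h' | h'
        · exact absurd h' hi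
        · exact h'
      refine ⟨fun j => x j.1, ?_⟩
      funext i
      by_cases hi : w i = 0
      · simp [extZero, hi]
      · simp [extZero, hi, hx i hi]
    · rintro ⟨y, rfl⟩ z
      rw [hpolar]
      apply Finset.sum_eq_zero
      intro i _
      by_cases hi : w i = 0
      · simp [hi]
      · have : extZero (fun i => w i = 0) y i = 0 := dif_neg hi
        simp [this]
  rw [hker]
  rw [LinearMap.finrank_range_of_inj (extZero_injective _),
    Module.finrank_fintype_fun_eq_card, Fintype.card_subtype]

lemma count3 {n : ℕ} (w : Fin n → ℝ) (hw : ∀ i, w i = -1 ∨ w i = 0 ∨ w i = 1) :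
    (Finset.univ.filter fun i => 0 < w i).card +
      (Finset.univ.filter fun i => 0 < -w i).card +
      (Finset.univ.filter fun i => w i = 0).card = n := by
  classical
  rw [Finset.card_filter, Finset.card_filter, Finset.card_filter,
    ← Finset.sum_add_distrib, ← Finset.sum_add_distrib]
  have hterm : ∀ i : Fin n, ((if 0 < w i then 1 else 0) + (if 0 < -w i then 1 else 0)
      + (if w i = 0 then 1 else 0) : ℕ) = 1 := by
    intro i
    rcases hw i with h | h | h <;> rw [h] <;> norm_num
  rw [Finset.sum_congr rfl fun i _ => hterm i]
  simp

end AuxPosIdx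

section Triple

variable {V : Type*} [AddCommGroup V] [Module ℝ V]

/-- The bilinear form `B((x₁,x₂,x₃),(y₁,y₂,y₃)) = ω(x₁,y₂)+ω(x₂,y₃)+ω(x₃,y₁)`. -/
noncomputable def tripleB (ω : V →ₗ[ℝ] V →ₗ[ℝ] ℝ) (L₁ L₂ L₃ : Submodule ℝ V) :
    LinearMap.BilinForm ℝ (↥L₁ × ↥L₂ × ↥L₃) :=
  LinearMap.mk₂ ℝ
    (fun x y => ω (x.1 : V) (y.2.1 : V) + ω (x.2.1 : V) (y.2.2 : V) + ω (x.2.2 : V) (y.1 : V))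
    (fun x x' y => by simp only [Prod.fst_add, Prod.snd_add, Submodule.coe_add, _root_.map_add,
      LinearMap.add_apply]; ring)
    (fun c x y => by
      simp only [Prod.smul_fst, Prod.smul_snd, Submodule.coe_smul]
      rw [ω.map_smul, ω.map_smul, ω.map_smul]
      simp only [LinearMap.smul_apply, smul_eq_mul]
      ring)
    (fun x y y' => by simp only [Prod.fst_add, Prod.snd_add, Submodule.coe_add,
      _root_.map_add]; ring)
    (fun c x y => by
      simp only [Prod.smul_fst, Prod.smul_snd, Submodule.coe_smul]
      rw [(ω _).map_smul, (ω _).map_smul, (ω _).map_smul]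
      simp only [smul_eq_mul]
      ring)

@[simp] lemma tripleB_apply (ω : V →ₗ[ℝ] V →ₗ[ℝ] ℝ) (L₁ L₂ L₃ : Submodule ℝ V)
    (x y : ↥L₁ × ↥L₂ × ↥L₃) :
    tripleB ω L₁ L₂ L₃ x y
      = ω (x.1 : V) (y.2.1 : V) + ω (x.2.1 : V) (y.2.2 : V) + ω (x.2.2 : V) (y.1 : V) := rfl

/-- The quadratic form of the Maslov index. -/
noncomputable def tripleQ (ω : V →ₗ[ℝ] V →ₗ[ℝ] ℝ) (L₁ L₂ L₃ : Submodule ℝ V) :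
    QuadraticForm ℝ (↥L₁ × ↥L₂ × ↥L₃) :=
  (tripleB ω L₁ L₂ L₃).toQuadraticMap

lemma tripleQ_apply (ω : V →ₗ[ℝ] V →ₗ[ℝ] ℝ) (L₁ L₂ L₃ : Submodule ℝ V)
    (x : ↥L₁ × ↥L₂ × ↥L₃) :
    tripleQ ω L₁ L₂ L₃ x
      = ω (x.1 : V) (x.2.1 : V) + ω (x.2.1 : V) (x.2.2 : V) + ω (x.2.2 : V) (x.1 : V) := rfl

lemma polar_tripleQ (ω : V →ₗ[ℝ] V →ₗ[ℝ] ℝ) (halt : ω.IsAlt) (L₁ L₂ L₃ : Submodule ℝ V)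
    (x y : ↥L₁ × ↥L₂ × ↥L₃) :
    polar (tripleQ ω L₁ L₂ L₃) x y
      = ω (y.1 : V) ((x.2.1 : V) - (x.2.2 : V)) + ω (y.2.1 : V) ((x.2.2 : V) - (x.1 : V))
        + ω (y.2.2 : V) ((x.1 : V) - (x.2.1 : V)) := by
  have h : polar (tripleQ ω L₁ L₂ L₃) x y = polarBilin (tripleQ ω L₁ L₂ L₃) x y := rfl
  rw [h, tripleQ, LinearMap.BilinMap.polarBilin_toQuadraticMap]
  simp only [LinearMap.add_apply, LinearMap.flip_apply, tripleB_apply, _root_.map_sub]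
  have h1 := halt.neg (x.1 : V) (y.2.1 : V)
  have h2 := halt.neg (x.2.1 : V) (y.2.2 : V)
  have h3 := halt.neg (x.2.2 : V) (y.1 : V)
  linarith [h1, h2, h3]

/-- The linear map `(a,b,c) ↦ (a+c, a+b, b+c)` into the triple product. -/
noncomputable def tripleF (L₁ L₂ L₃ : Submodule ℝ V) :
    (↥(L₁ ⊓ L₂) × ↥(L₂ ⊓ L₃) × ↥(L₃ ⊓ L₁)) →ₗ[ℝ] (↥L₁ × ↥L₂ × ↥L₃) :=
  let pa := LinearMap.fst ℝ ↥(L₁ ⊓ L₂) (↥(L₂ ⊓ L₃) × ↥(L₃ ⊓ L₁))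
  let pb := (LinearMap.fst ℝ ↥(L₂ ⊓ L₃) ↥(L₃ ⊓ L₁)).comp
    (LinearMap.snd ℝ ↥(L₁ ⊓ L₂) (↥(L₂ ⊓ L₃) × ↥(L₃ ⊓ L₁)))
  let pc := (LinearMap.snd ℝ ↥(L₂ ⊓ L₃) ↥(L₃ ⊓ L₁)).comp
    (LinearMap.snd ℝ ↥(L₁ ⊓ L₂) (↥(L₂ ⊓ L₃) × ↥(L₃ ⊓ L₁)))
  (((Submodule.inclusion inf_le_left).comp pa)
      + ((Submodule.inclusion inf_le_right).comp pc)).prod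
    ((((Submodule.inclusion inf_le_right).comp pa)
      + ((Submodule.inclusion inf_le_left).comp pb)).prod
      (((Submodule.inclusion inf_le_right).comp pb)
        + ((Submodule.inclusion inf_le_left).comp pc)))

lemma tripleF_coe (L₁ L₂ L₃ : Submodule ℝ V) (d : ↥(L₁ ⊓ L₂) × ↥(L₂ ⊓ L₃) × ↥(L₃ ⊓ L₁)) :
    ((tripleF L₁ L₂ L₃ d).1 : V) = (d.1 : V) + (d.2.2 : V)
    ∧ ((tripleF L₁ L₂ L₃ d).2.1 : V) = (d.1 : V) + (d.2.1 : V)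
    ∧ ((tripleF L₁ L₂ L₃ d).2.2 : V) = (d.2.1 : V) + (d.2.2 : V) := by
  refine ⟨?_, ?_, ?_⟩ <;>
    simp [tripleF, Submodule.coe_inclusion]

end Triple

section Main

variable {V : Type*} [AddCommGroup V] [Module ℝ V] [FiniteDimensional ℝ V]

lemma lagrangian_max (ω : V →ₗ[ℝ] V →ₗ[ℝ] ℝ) (hrefl : LinearMap.BilinForm.IsRefl ω)
    (hnd : LinearMap.BilinForm.Nondegenerate ω) {L : Submodule ℝ V}
    (hL : IsLagrangianSub ω L) {v : V} (hv : ∀ u ∈ L, ω u v = 0) : v ∈ L := by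
  have hle : L ≤ LinearMap.BilinForm.orthogonal ω L := by
    intro x hx
    rw [LinearMap.BilinForm.mem_orthogonal_iff]
    intro n hn
    exact hL.1 n hn x hx
  have hfin := LinearMap.BilinForm.finrank_orthogonal (B := ω) hnd L
  have heq : L = LinearMap.BilinForm.orthogonal ω L := by
    apply Submodule.eq_of_le_of_finrank_le hle
    rw [hfin]
    have := hL.2
    omega
  rw [heq, LinearMap.BilinForm.mem_orthogonal_iff]
  intro n hn; exact hv n hn

lemma triple_ker_finrank (g : ℕ) (hdim : Module.finrank ℝ V = 2 * g)
    (ω : V →ₗ[ℝ] V →ₗ[ℝ] ℝ) (halt : ω.IsAlt) (hnd : LinearMap.BilinForm.Nondegenerate ω)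
    (L₁ L₂ L₃ : Submodule ℝ V)
    (h1 : IsLagrangianSub ω L₁) (h2 : IsLagrangianSub ω L₂) (h3 : IsLagrangianSub ω L₃) :
    finrank ℝ (LinearMap.ker (polarBilin (tripleQ ω L₁ L₂ L₃)))
      = finrank ℝ ↥(L₁ ⊓ L₂) + finrank ℝ ↥(L₂ ⊓ L₃) + finrank ℝ ↥(L₃ ⊓ L₁) := by
  have hrefl : LinearMap.BilinForm.IsRefl ω := halt.isRefl
  -- injectivity of tripleF
  have hinj : Function.Injective (tripleF L₁ L₂ L₃) := by
    rw [← LinearMap.ker_eq_bot, LinearMap.ker_eq_bot']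
    intro d hd
    obtain ⟨hA, hB, hC⟩ := tripleF_coe L₁ L₂ L₃ d
    rw [hd] at hA hB hC
    simp only [Prod.fst_zero, Prod.snd_zero, Submodule.coe_zero] at hA hB hC
    have ha : (d.1 : V) = 0 := by
      have h2a : (2 : ℝ) • (d.1 : V) = 0 := by
        have : ((d.1 : V) + (d.2.2 : V)) + ((d.1 : V) + (d.2.1 : V))
            - ((d.2.1 : V) + (d.2.2 : V)) = (2 : ℝ) • (d.1 : V) := by
          rw [two_smul]; abel
        rw [← this, ← hA, ← hB, ← hC]; abel
      have := smul_eq_zero.mp h2a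
      simpa using this
    have hb : (d.2.1 : V) = 0 := by
      have := hB.symm
      rw [ha] at hB
      simpa using hB.symm
    have hc : (d.2.2 : V) = 0 := by
      rw [ha] at hA
      simpa using hA.symm
    have : d = (0, 0, 0) := by
      ext
      · exact ha
      · exact hb
      · exact hc
    exact this
  -- range of tripleF is the kernel of the polar form
  have hrange : LinearMap.range (tripleF L₁ L₂ L₃)
      = LinearMap.ker (polarBilin (tripleQ ω L₁ L₂ L₃)) := by
    ext x
    simp only [LinearMap.mem_range, LinearMap.mem_ker, LinearMap.ext_iff,
      LinearMap.zero_apply, polarBilin_apply_apply]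
    constructor
    · rintro ⟨d, rfl⟩ y
      obtain ⟨hA, hB, hC⟩ := tripleF_coe L₁ L₂ L₃ d
      rw [polar_tripleQ ω halt, hA, hB, hC]
      have e1 : ω (y.1 : V) (((d.1 : V) + (d.2.1 : V)) - ((d.2.1 : V) + (d.2.2 : V))) = 0 := by
        have hmem : ((d.1 : V) + (d.2.1 : V)) - ((d.2.1 : V) + (d.2.2 : V)) ∈ L₁ := by
          have h1' : (d.1 : V) ∈ L₁ := d.1.2.1
          have h2' : (d.2.2 : V) ∈ L₁ := d.2.2.2.2
          have : ((d.1 : V) + (d.2.1 : V)) - ((d.2.1 : V) + (d.2.2 : V))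
              = (d.1 : V) - (d.2.2 : V) := by abel
          rw [this]
          exact sub_mem h1' h2'
        exact h1.1 _ y.1.2 _ hmem
      have e2 : ω (y.2.1 : V) (((d.2.1 : V) + (d.2.2 : V)) - ((d.1 : V) + (d.2.2 : V))) = 0 := by
        have hmem : ((d.2.1 : V) + (d.2.2 : V)) - ((d.1 : V) + (d.2.2 : V)) ∈ L₂ := by
          have h1' : (d.2.1 : V) ∈ L₂ := d.2.1.2.1
          have h2' : (d.1 : V) ∈ L₂ := d.1.2.2
          have : ((d.2.1 : V) + (d.2.2 : V)) - ((d.1 : V) + (d.2.2 : V))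
              = (d.2.1 : V) - (d.1 : V) := by abel
          rw [this]
          exact sub_mem h1' h2'
        exact h2.1 _ y.2.1.2 _ hmem
      have e3 : ω (y.2.2 : V) (((d.1 : V) + (d.2.2 : V)) - ((d.1 : V) + (d.2.1 : V))) = 0 := by
        have hmem : ((d.1 : V) + (d.2.2 : V)) - ((d.1 : V) + (d.2.1 : V)) ∈ L₃ := by
          have h1' : (d.2.2 : V) ∈ L₃ := d.2.2.2.1
          have h2' : (d.2.1 : V) ∈ L₃ := d.2.1.2.2
          have : ((d.1 : V) + (d.2.2 : V)) - ((d.1 : V) + (d.2.1 : V))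
              = (d.2.2 : V) - (d.2.1 : V) := by abel
          rw [this]
          exact sub_mem h1' h2'
        exact h3.1 _ y.2.2.2 _ hmem
      rw [e1, e2, e3]
      ring
    · intro h
      -- derive the three difference conditions
      have k1 : (x.2.1 : V) - (x.2.2 : V) ∈ L₁ := by
        apply lagrangian_max ω hrefl hnd h1
        intro u hu
        have := h (⟨u, hu⟩, 0, 0)
        rw [polar_tripleQ ω halt] at this
        simpa using this
      have k2 : (x.2.2 : V) - (x.1 : V) ∈ L₂ := by
        apply lagrangian_max ω hrefl hnd h2
        intro u hu
        have := h (0, ⟨u, hu⟩, 0)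
        rw [polar_tripleQ ω halt] at this
        simpa using this
      have k3 : (x.1 : V) - (x.2.1 : V) ∈ L₃ := by
        apply lagrangian_max ω hrefl hnd h3
        intro u hu
        have := h (0, 0, ⟨u, hu⟩)
        rw [polar_tripleQ ω halt] at this
        simpa using this
      -- construct the preimage
      have haL1 : (2⁻¹ : ℝ) • ((x.1 : V) + (x.2.1 : V) - (x.2.2 : V)) ∈ L₁ := by
        apply Submodule.smul_mem
        have : (x.1 : V) + (x.2.1 : V) - (x.2.2 : V)
            = (x.1 : V) + ((x.2.1 : V) - (x.2.2 : V)) := by abel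
        rw [this]; exact add_mem x.1.2 k1
      have haL2 : (2⁻¹ : ℝ) • ((x.1 : V) + (x.2.1 : V) - (x.2.2 : V)) ∈ L₂ := by
        apply Submodule.smul_mem
        have : (x.1 : V) + (x.2.1 : V) - (x.2.2 : V)
            = (x.2.1 : V) - ((x.2.2 : V) - (x.1 : V)) := by abel
        rw [this]; exact sub_mem x.2.1.2 k2
      have hbL2 : (2⁻¹ : ℝ) • ((x.2.1 : V) + (x.2.2 : V) - (x.1 : V)) ∈ L₂ := by
        apply Submodule.smul_mem
        have : (x.2.1 : V) + (x.2.2 : V) - (x.1 : V)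
            = (x.2.1 : V) + ((x.2.2 : V) - (x.1 : V)) := by abel
        rw [this]; exact add_mem x.2.1.2 k2
      have hbL3 : (2⁻¹ : ℝ) • ((x.2.1 : V) + (x.2.2 : V) - (x.1 : V)) ∈ L₃ := by
        apply Submodule.smul_mem
        have : (x.2.1 : V) + (x.2.2 : V) - (x.1 : V)
            = (x.2.2 : V) - ((x.1 : V) - (x.2.1 : V)) := by abel
        rw [this]; exact sub_mem x.2.2.2 k3
      have hcL3 : (2⁻¹ : ℝ) • ((x.2.2 : V) + (x.1 : V) - (x.2.1 : V)) ∈ L₃ := by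
        apply Submodule.smul_mem
        have : (x.2.2 : V) + (x.1 : V) - (x.2.1 : V)
            = (x.2.2 : V) + ((x.1 : V) - (x.2.1 : V)) := by abel
        rw [this]; exact add_mem x.2.2.2 k3
      have hcL1 : (2⁻¹ : ℝ) • ((x.2.2 : V) + (x.1 : V) - (x.2.1 : V)) ∈ L₁ := by
        apply Submodule.smul_mem
        have : (x.2.2 : V) + (x.1 : V) - (x.2.1 : V)
            = (x.1 : V) - ((x.2.1 : V) - (x.2.2 : V)) := by abel
        rw [this]; exact sub_mem x.1.2 k1
      refine ⟨(⟨_, Submodule.mem_inf.mpr ⟨haL1, haL2⟩⟩,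
        ⟨_, Submodule.mem_inf.mpr ⟨hbL2, hbL3⟩⟩,
        ⟨_, Submodule.mem_inf.mpr ⟨hcL3, hcL1⟩⟩), ?_⟩
      obtain ⟨hA, hB, hC⟩ := tripleF_coe L₁ L₂ L₃
        ((⟨_, Submodule.mem_inf.mpr ⟨haL1, haL2⟩⟩,
        ⟨_, Submodule.mem_inf.mpr ⟨hbL2, hbL3⟩⟩,
        ⟨_, Submodule.mem_inf.mpr ⟨hcL3, hcL1⟩⟩) :
          ↥(L₁ ⊓ L₂) × ↥(L₂ ⊓ L₃) × ↥(L₃ ⊓ L₁))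
      have h2ne : (2⁻¹ : ℝ) + 2⁻¹ = 1 := by norm_num
      ext
      · show ((tripleF L₁ L₂ L₃ _).1 : V) = (x.1 : V)
        rw [hA]
        show (2⁻¹ : ℝ) • ((x.1 : V) + (x.2.1 : V) - (x.2.2 : V))
          + (2⁻¹ : ℝ) • ((x.2.2 : V) + (x.1 : V) - (x.2.1 : V)) = (x.1 : V)
        rw [← smul_add]
        have : ((x.1 : V) + (x.2.1 : V) - (x.2.2 : V))
            + ((x.2.2 : V) + (x.1 : V) - (x.2.1 : V)) = (2 : ℝ) • (x.1 : V) := by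
          rw [two_smul]; abel
        rw [this, smul_smul]
        norm_num
      · show ((tripleF L₁ L₂ L₃ _).2.1 : V) = (x.2.1 : V)
        rw [hB]
        show (2⁻¹ : ℝ) • ((x.1 : V) + (x.2.1 : V) - (x.2.2 : V))
          + (2⁻¹ : ℝ) • ((x.2.1 : V) + (x.2.2 : V) - (x.1 : V)) = (x.2.1 : V)
        rw [← smul_add]
        have : ((x.1 : V) + (x.2.1 : V) - (x.2.2 : V))
            + ((x.2.1 : V) + (x.2.2 : V) - (x.1 : V)) = (2 : ℝ) • (x.2.1 : V) := by
          rw [two_smul]; abel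
        rw [this, smul_smul]
        norm_num
      · show ((tripleF L₁ L₂ L₃ _).2.2 : V) = (x.2.2 : V)
        rw [hC]
        show (2⁻¹ : ℝ) • ((x.2.1 : V) + (x.2.2 : V) - (x.1 : V))
          + (2⁻¹ : ℝ) • ((x.2.2 : V) + (x.1 : V) - (x.2.1 : V)) = (x.2.2 : V)
        rw [← smul_add]
        have : ((x.2.1 : V) + (x.2.2 : V) - (x.1 : V))
            + ((x.2.2 : V) + (x.1 : V) - (x.2.1 : V)) = (2 : ℝ) • (x.2.2 : V) := by
          rw [two_smul]; abel
        rw [this, smul_smul]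
        norm_num
  rw [← hrange, LinearMap.finrank_range_of_inj hinj]
  rw [Module.finrank_prod, Module.finrank_prod]
  ring

end Main

/-- Parity of the Maslov-Kashiwara index:
`τ(L₁,L₂,L₃) ≡ g + dim(L₁∩L₂) + dim(L₂∩L₃) + dim(L₃∩L₁) (mod 2)`, where `dim V = 2g`. -/
theorem stmt_8 (V : Type*) [AddCommGroup V] [Module ℝ V] [FiniteDimensional ℝ V]
    (g : ℕ) (hdim : Module.finrank ℝ V = 2 * g)
    (ω : V →ₗ[ℝ] V →ₗ[ℝ] ℝ) (halt : ∀ v : V, ω v v = 0)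
    (hnd : ∀ v : V, (∀ w : V, ω v w = 0) → v = 0)
    (L₁ L₂ L₃ : Submodule ℝ V)
    (h1 : IsLagrangianSub ω L₁) (h2 : IsLagrangianSub ω L₂) (h3 : IsLagrangianSub ω L₃) :
    maslovIndex ω L₁ L₂ L₃ ≡
      (g : ℤ) + Module.finrank ℝ ↥(L₁ ⊓ L₂) + Module.finrank ℝ ↥(L₂ ⊓ L₃)
        + Module.finrank ℝ ↥(L₃ ⊓ L₁) [ZMOD 2] := by
  classical
  have halt' : ω.IsAlt := halt
  have hnd' : LinearMap.BilinForm.Nondegenerate ω :=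
    (LinearMap.IsRefl.nondegenerate_iff_separatingLeft halt'.isRefl).mpr fun v hv => hnd v hv
  set Q := tripleQ ω L₁ L₂ L₃ with hQ
  have hfun : (fun x : ↥L₁ × ↥L₂ × ↥L₃ =>
      ω (x.1 : V) (x.2.1 : V) + ω (x.2.1 : V) (x.2.2 : V) + ω (x.2.2 : V) (x.1 : V)) = ⇑Q := by
    funext x
    exact (tripleQ_apply ω L₁ L₂ L₃ x).symm
  have hmi : maslovIndex ω L₁ L₂ L₃ = (posIdx ⇑Q : ℤ) - (posIdx (fun x => -Q x) : ℤ) := by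
    rw [maslovIndex, hfun]
    rfl
  obtain ⟨w, hw, ⟨e⟩⟩ := Q.equivalent_one_zero_neg_one_weighted_sum_squared
  have hdiagfun : ⇑(weightedSumSquares ℝ w)
      = fun x : Fin (Module.finrank ℝ (↥L₁ × ↥L₂ × ↥L₃)) → ℝ => ∑ i, w i * (x i * x i) := by
    funext x
    rw [weightedSumSquares_apply]
    simp [smul_eq_mul]
  have hpos : posIdx ⇑Q = (Finset.univ.filter fun i => 0 < w i).card := by
    rw [posIdx_isometry Q _ e, hdiagfun, posIdx_diag]
  have hnegfun : (fun x => -(weightedSumSquares ℝ w) x)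
      = fun x : Fin (Module.finrank ℝ (↥L₁ × ↥L₂ × ↥L₃)) → ℝ => ∑ i, (-w) i * (x i * x i) := by
    funext x
    rw [weightedSumSquares_apply, ← Finset.sum_neg_distrib]
    refine Finset.sum_congr rfl fun i _ => ?_
    simp only [smul_eq_mul, Pi.neg_apply]
    ring
  have hneg : posIdx (fun x => -Q x) = (Finset.univ.filter fun i => 0 < -w i).card := by
    rw [posIdx_neg_isometry Q _ e, hnegfun, posIdx_diag]
    simp only [Pi.neg_apply]
  have hker : finrank ℝ (LinearMap.ker (polarBilin Q))
      = (Finset.univ.filter fun i => w i = 0).card := by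
    rw [rad_transfer Q _ e, rad_diag]
  have hker' := triple_ker_finrank g hdim ω halt' hnd' L₁ L₂ L₃ h1 h2 h3
  have hcount := count3 w hw
  have hNval : Module.finrank ℝ (↥L₁ × ↥L₂ × ↥L₃) = 3 * g := by
    rw [Module.finrank_prod, Module.finrank_prod]
    have e1 := h1.2
    have e2 := h2.2
    have e3 := h3.2
    omega
  rw [hmi, hpos, hneg]
  have hz : (Finset.univ.filter fun i => w i = 0).card
      = finrank ℝ ↥(L₁ ⊓ L₂) + finrank ℝ ↥(L₂ ⊓ L₃) + finrank ℝ ↥(L₃ ⊓ L₁) := by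
    rw [← hker]
    exact hker'
  rw [hz] at hcount
  show _ % 2 = _ % 2
  omega
end

section
/- Let Z be a self-dual lattice in a 2g-dimensional symplectic vector space (V, ω), and L ⊂ V an isotropic subspace of dimension l ≤ g such that Z ∩ L spans L over ℝ. Then there exists a symplectic basis (W₁,…,W_g; W₁^⊥,…,W_g^⊥) of (V,ω) such that Z = ℤW₁ ⊕ ⋯ ⊕ ℤW_g ⊕ ℤW₁^⊥ ⊕ ⋯ ⊕ ℤW_g^⊥, L = ℝW₁ ⊕ ⋯ ⊕ ℝW_l, with ω(W_i, W_j^⊥) = δ_{ij} and ω(W_i, W_j) = ω(W_i^⊥, W_j^⊥) = 0. -/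
universe u

private theorem stmt10_skew {V : Type*} [AddCommGroup V] [Module ℝ V]
    (ω : V →ₗ[ℝ] V →ₗ[ℝ] ℝ) (halt : ∀ v : V, ω v v = 0) (x y : V) :
    ω x y = - ω y x := by
  have h := halt (x + y)
  simp only [map_add, LinearMap.add_apply, halt x, halt y] at h
  linarith

private theorem stmt10_dual {V : Type*} [AddCommGroup V] [Module ℝ V]
    (ω : V →ₗ[ℝ] V →ₗ[ℝ] ℝ)
    (hnd : ∀ v : V, (∀ w : V, ω v w = 0) → v = 0)
    (Z : AddSubgroup V)
    (hsd : ∀ x : V, x ∈ Z ↔ ∀ w ∈ Z, ∃ n : ℤ, ω x w = (n : ℝ))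
    (hVspan : Submodule.span ℝ (Z : Set V) = ⊤)
    (e : V) (heZ : e ∈ Z) (he0 : e ≠ 0)
    (hprim : ∀ z ∈ Z, ∀ d : ℤ, e = d • z → IsUnit d) :
    ∃ f ∈ Z, ω e f = 1 := by
  -- the pairing with e is not identically zero on Z
  have hnz : ∃ w ∈ Z, ω e w ≠ 0 := by
    by_contra h
    push_neg at h
    refine he0 (hnd e fun w => ?_)
    have hw : w ∈ Submodule.span ℝ (Z : Set V) := by rw [hVspan]; trivial
    induction hw using Submodule.span_induction with
    | mem x hx => exact h x hx
    | zero => simp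
    | add x y _ _ hx hy => simp [hx, hy]
    | smul r x _ hx => simp [hx]
  -- the subgroup of integer values of the pairing with e
  have hint : ∀ w ∈ Z, ∃ n : ℤ, ω e w = (n : ℝ) := (hsd e).mp heZ
  let H : AddSubgroup ℤ :=
    { carrier := {n : ℤ | ∃ w ∈ Z, ω e w = (n : ℝ)}
      zero_mem' := ⟨0, Z.zero_mem, by simp⟩
      add_mem' := by
        rintro a b ⟨w, hw, hw'⟩ ⟨w2, hw2, hw2'⟩
        exact ⟨w + w2, Z.add_mem hw hw2, by push_cast; simp [hw', hw2']⟩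
      neg_mem' := by
        rintro a ⟨w, hw, hw'⟩
        exact ⟨-w, Z.neg_mem hw, by push_cast; simp [hw']⟩ }
  obtain ⟨d, hd⟩ := Int.subgroup_cyclic H
  -- d ≠ 0
  have hd0 : d ≠ 0 := by
    rintro rfl
    obtain ⟨w, hw, hw0⟩ := hnz
    obtain ⟨n, hn⟩ := hint w hw
    have hnH : n ∈ H := ⟨w, hw, hn⟩
    rw [hd, AddSubgroup.mem_closure_singleton] at hnH
    obtain ⟨m, hm⟩ := hnH
    apply hw0
    rw [hn, ← hm]
    norm_num
  -- a witness for d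
  have hdH : d ∈ H := by rw [hd]; exact AddSubgroup.subset_closure rfl
  obtain ⟨w₁, hw₁Z, hw₁⟩ := hdH
  -- (1/d) • e belongs to Z by self-duality
  have hz : (d : ℝ)⁻¹ • e ∈ Z := by
    rw [hsd]
    intro w hw
    obtain ⟨n, hn⟩ := hint w hw
    have hnH : n ∈ H := ⟨w, hw, hn⟩
    rw [hd, AddSubgroup.mem_closure_singleton] at hnH
    obtain ⟨m, hm⟩ := hnH
    refine ⟨m, ?_⟩
    have : ω ((d : ℝ)⁻¹ • e) w = (d : ℝ)⁻¹ * ω e w := by simp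
    rw [this, hn, ← hm]
    push_cast
    field_simp
    push_cast [smul_eq_mul]
    ring
  have hunit : IsUnit d := by
    apply hprim _ hz
    have hdr : (d : ℝ) ≠ 0 := Int.cast_ne_zero.mpr hd0
    rw [← Int.cast_smul_eq_zsmul ℝ, smul_inv_smul₀ hdr]
  have hd1 : d = 1 ∨ d = -1 := Int.isUnit_iff.mp hunit
  refine ⟨d • w₁, Z.zsmul_mem hw₁Z d, ?_⟩
  have : ω e (d • w₁) = (d : ℝ) * ω e w₁ := by simp
  rw [this, hw₁]
  rcases hd1 with h | h <;> rw [h] <;> norm_num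


set_option maxHeartbeats 1000000 in
private theorem stmt10_aux (g : ℕ) :
    ∀ (V : Type u) [AddCommGroup V] [Module ℝ V] [FiniteDimensional ℝ V],
    ∀ (_hdim : Module.finrank ℝ V = 2 * g)
    (ω : V →ₗ[ℝ] V →ₗ[ℝ] ℝ) (_halt : ∀ v : V, ω v v = 0)
    (_hnd : ∀ v : V, (∀ w : V, ω v w = 0) → v = 0)
    (Z : AddSubgroup V)
    (_hlat : ∃ b : Module.Basis (Fin (2 * g)) ℝ V, Z = AddSubgroup.closure (Set.range b))
    (_hsd : ∀ x : V, x ∈ Z ↔ ∀ w ∈ Z, ∃ n : ℤ, ω x w = (n : ℝ))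
    (L : Submodule ℝ V) (l : ℕ) (_hl : l ≤ g)
    (_hiso : ∀ x ∈ L, ∀ y ∈ L, ω x y = 0)
    (_hLdim : Module.finrank ℝ L = l)
    (_hspan : Submodule.span ℝ ((Z : Set V) ∩ (L : Set V)) = L),
    ∃ W Wp : Fin g → V,
      (∀ i j, ω (W i) (Wp j) = if i = j then 1 else 0) ∧
      (∀ i j, ω (W i) (W j) = 0) ∧
      (∀ i j, ω (Wp i) (Wp j) = 0) ∧
      Z = AddSubgroup.closure (Set.range W ∪ Set.range Wp) ∧
      L = Submodule.span ℝ (W '' {i : Fin g | (i : ℕ) < l}) := by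
  induction g with
  | zero =>
    intro V _ _ _ hdim ω halt hnd Z hlat hsd L l hl hiso hLdim hspan
    have hsub : Subsingleton V := by
      rw [← Module.finrank_zero_iff (R := ℝ)]
      omega
    refine ⟨Fin.elim0, Fin.elim0, fun i => i.elim0, fun i => i.elim0, fun i => i.elim0, ?_, ?_⟩
    · apply le_antisymm
      · intro x _
        have : x = 0 := Subsingleton.elim x 0
        simp [this, AddSubgroup.zero_mem]
      · intro x _
        have : x = 0 := Subsingleton.elim x 0
        simp [this, AddSubgroup.zero_mem]
    · apply le_antisymm
      · intro x _
        have : x = (0 : V) := Subsingleton.elim x 0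
        simp [this, Submodule.zero_mem]
      · intro x _
        have : x = (0 : V) := Subsingleton.elim x 0
        simp [this, Submodule.zero_mem]
  | succ k IH =>
    intro V _ _ _ hdim ω halt hnd Z hlat hsd L l hl hiso hLdim hspan
    obtain ⟨b, hb⟩ := hlat
    set ZS : Submodule ℤ V := Submodule.span ℤ (Set.range b) with hZS
    have hmem : ∀ x : V, x ∈ Z ↔ x ∈ ZS := by
      intro x
      rw [hb, ← Submodule.span_int_eq_addSubgroupClosure]
      exact Iff.rfl
    let bZ : Module.Basis (Fin (2*(k+1))) ℤ ZS := b.restrictScalars ℤ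
    have hbZ : ∀ i, (bZ i : V) = b i := fun i => b.restrictScalars_apply ℤ i
    have hVspan : Submodule.span ℝ (Z : Set V) = ⊤ := by
      rw [eq_top_iff, ← b.span_eq]
      apply Submodule.span_mono
      rintro _ ⟨i, rfl⟩
      rw [SetLike.mem_coe, hmem]
      exact Submodule.subset_span ⟨i, rfl⟩
    have hint : ∀ x ∈ Z, ∀ w ∈ Z, ∃ n : ℤ, ω x w = (n : ℝ) := fun x hx => (hsd x).mp hx
    -- divisibility of coordinates
    have hdvd : ∀ (x : V) (hx : x ∈ ZS), ∀ z ∈ Z, ∀ d : ℤ, x = d • z →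
        ∀ i, d ∣ bZ.repr ⟨x, hx⟩ i := by
      intro x hx z hz d hxz i
      have hz' : z ∈ ZS := (hmem z).mp hz
      have hxe : (⟨x, hx⟩ : ZS) = d • ⟨z, hz'⟩ := Subtype.ext (by simpa using hxz)
      rw [hxe, map_smul]
      exact ⟨bZ.repr ⟨z, hz'⟩ i, rfl⟩
    -- a primitive vector e (in L if l > 0)
    obtain ⟨e, heZ, he0, heL, hprim⟩ :
        ∃ e : V, e ∈ Z ∧ e ≠ 0 ∧ (0 < l → e ∈ L) ∧
          (∀ z ∈ Z, ∀ d : ℤ, e = d • z → IsUnit d) := by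
      rcases Nat.eq_zero_or_pos l with hl0 | hl0
      · have hb0ZS : b 0 ∈ ZS := Submodule.subset_span ⟨0, rfl⟩
        refine ⟨b 0, (hmem _).mpr hb0ZS, b.ne_zero 0, by omega, ?_⟩
        · intro z hz d h
          have h1 := hdvd (b 0) hb0ZS z hz d h 0
          have h2 : (⟨b 0, hb0ZS⟩ : ZS) = bZ 0 := Subtype.ext (hbZ 0).symm
          rw [h2, bZ.repr_self] at h1
          simp at h1
          exact isUnit_of_dvd_one h1
      · -- nonzero element of Z ∩ L
        have hLne : ∃ x, x ∈ (Z : Set V) ∩ (L : Set V) ∧ x ≠ 0 := by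
          by_contra h
          push_neg at h
          have hLbot : L ≤ ⊥ := by
            rw [← hspan]
            rw [Submodule.span_le]
            intro x hx
            simp [h x hx]
          have : Module.finrank ℝ L = 0 := by
            rw [le_bot_iff.mp hLbot]
            exact finrank_bot ℝ V
          omega
        obtain ⟨x, ⟨hxZ, hxL⟩, hx0⟩ := hLne
        have hxZS : x ∈ ZS := (hmem x).mp hxZ
        set n : Fin (2*(k+1)) → ℤ := fun i => bZ.repr ⟨x, hxZS⟩ i with hn
        set d : ℤ := Finset.univ.gcd n with hdd
        have hn0 : ∃ i, n i ≠ 0 := by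
          by_contra h
          push_neg at h
          apply hx0
          have : bZ.repr ⟨x, hxZS⟩ = 0 := by ext i; exact h i
          have h2 : (⟨x, hxZS⟩ : ZS) = 0 := bZ.repr.injective (by rw [this, map_zero])
          simpa using congrArg (Subtype.val) h2
        obtain ⟨i₀, hi₀⟩ := hn0
        have hd0 : d ≠ 0 := by
          intro h
          rw [hdd] at h
          rw [Finset.gcd_eq_zero_iff] at h
          exact hi₀ (h i₀ (Finset.mem_univ _))
        set eZ : ZS := ∑ i, (n i / d) • bZ i with heZdef
        have hrepr : ∀ i, bZ.repr eZ i = n i / d := by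
          intro i
          rw [heZdef]
          exact congrFun (bZ.repr_sum_self _) i
        have hxe : (⟨x, hxZS⟩ : ZS) = d • eZ := by
          apply bZ.repr.injective
          rw [map_smul]
          ext i
          rw [Finsupp.smul_apply, hrepr i, smul_eq_mul,
            Int.mul_ediv_cancel' (Finset.gcd_dvd (Finset.mem_univ i))]
        have hxeV : x = (d : ℤ) • (eZ : V) := by
          have := congrArg Subtype.val hxe
          simpa using this
        have he0' : (eZ : V) ≠ 0 := by
          intro h
          apply hx0
          rw [hxeV, h, smul_zero]
        refine ⟨(eZ : V), (hmem _).mpr eZ.2, he0', fun _ => ?_, ?_⟩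
        · have : (eZ : V) = (d : ℝ)⁻¹ • x := by
            rw [hxeV, ← Int.cast_smul_eq_zsmul ℝ, inv_smul_smul₀ (Int.cast_ne_zero.mpr hd0)]
          rw [this]
          exact L.smul_mem _ hxL
        · intro z hz d' h
          have hdvd_all := hdvd (eZ : V) eZ.2 z hz d' h
          have : d' ∣ Finset.univ.gcd (fun i => n i / d) := by
            apply Finset.dvd_gcd
            intro i _
            have := hdvd_all i
            rwa [Subtype.coe_eta, hrepr i] at this
          rw [hdd, Finset.gcd_div_eq_one (Finset.mem_univ i₀) hi₀] at this
          exact isUnit_of_dvd_one this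
    obtain ⟨f, hfZ, hef⟩ := stmt10_dual ω hnd Z hsd hVspan e heZ he0 hprim
    have hskew : ∀ x y : V, ω x y = - ω y x := stmt10_skew ω halt
    have hfe : ω f e = -1 := by rw [hskew f e, hef]
    -- the projection onto the symplectic complement of (e, f)
    set π : V →ₗ[ℝ] V := LinearMap.id + (ω f).smulRight e - (ω e).smulRight f with hπdef
    have hπ : ∀ v, π v = v + ω f v • e - ω e v • f := by
      intro v
      simp [hπdef]
    have hπe : ∀ v, ω e (π v) = 0 := by
      intro v
      rw [hπ]
      simp [halt e, hef]
    have hπf : ∀ v, ω f (π v) = 0 := by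
      intro v
      rw [hπ]
      simp [halt f, hfe]
    set V₀ : Submodule ℝ V := LinearMap.ker (ω e) ⊓ LinearMap.ker (ω f) with hV₀def
    have hV₀ : ∀ v, v ∈ V₀ ↔ ω e v = 0 ∧ ω f v = 0 := by
      intro v
      simp [hV₀def, LinearMap.mem_ker]
    have hπV₀ : ∀ v, π v ∈ V₀ := fun v => (hV₀ _).mpr ⟨hπe v, hπf v⟩
    have hπid : ∀ v ∈ V₀, π v = v := by
      intro v hv
      rw [hV₀] at hv
      rw [hπ, hv.1, hv.2]
      simp
    have hdim₀ : Module.finrank ℝ V₀ = 2 * k := by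
      set Φ : V →ₗ[ℝ] ℝ × ℝ := (ω e).prod (ω f) with hΦ
      have hker : LinearMap.ker Φ = V₀ := by
        ext v
        simp [hΦ, LinearMap.mem_ker, Prod.ext_iff, hV₀, LinearMap.prod_apply, Prod.zero_eq_mk]
      have hrange : LinearMap.range Φ = ⊤ := by
        rw [eq_top_iff]
        rintro ⟨a, c⟩ -
        refine ⟨a • f + (-c) • e, ?_⟩
        simp [hΦ, hef, hfe, halt e, halt f, LinearMap.prod_apply, Prod.ext_iff]
      have hre := Φ.finrank_range_add_finrank_ker
      rw [hrange, hker, hdim, finrank_top] at hre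
      have h2 : Module.finrank ℝ (ℝ × ℝ) = 2 := by
        simp [Module.finrank_prod]
      omega
    set ω₀ : V₀ →ₗ[ℝ] V₀ →ₗ[ℝ] ℝ := ω.domRestrict₁₂ V₀ V₀ with hω₀
    have hω₀app : ∀ x y : V₀, ω₀ x y = ω x y := fun x y => rfl
    have halt₀ : ∀ v : V₀, ω₀ v v = 0 := fun v => halt v
    have hdecomp : ∀ v ∈ V₀, ∀ w : V, ω v w = ω v (π w) := by
      intro v hv w
      rw [hV₀] at hv
      have hve : ω v e = 0 := by rw [hskew, hv.1, neg_zero]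
      have hvf : ω v f = 0 := by rw [hskew, hv.2, neg_zero]
      rw [hπ]
      simp [hve, hvf]
    have hnd₀ : ∀ v : V₀, (∀ w : V₀, ω₀ v w = 0) → v = 0 := by
      intro v hv
      refine Subtype.ext (hnd _ fun w => ?_)
      rw [hdecomp v v.2 w]
      exact hv ⟨π w, hπV₀ w⟩
    set Z₀ : AddSubgroup V₀ := Z.comap (V₀.subtype.toAddMonoidHom) with hZ₀def
    have hZ₀mem : ∀ x : V₀, x ∈ Z₀ ↔ (x : V) ∈ Z := fun x => Iff.rfl
    have hπZ : ∀ w ∈ Z, π w ∈ Z := by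
      intro w hw
      obtain ⟨nf, hnf⟩ := hint f hfZ w hw
      obtain ⟨ne', hne⟩ := hint e heZ w hw
      rw [hπ, hnf, hne, Int.cast_smul_eq_zsmul ℝ nf e, Int.cast_smul_eq_zsmul ℝ ne' f]
      exact Z.sub_mem (Z.add_mem hw (Z.zsmul_mem heZ nf)) (Z.zsmul_mem hfZ ne')
    have hsd₀ : ∀ x : V₀, x ∈ Z₀ ↔ ∀ w ∈ Z₀, ∃ n : ℤ, ω₀ x w = (n : ℝ) := by
      intro x
      constructor
      · intro hx w hw
        exact hint _ ((hZ₀mem x).mp hx) _ ((hZ₀mem w).mp hw)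
      · intro h
        rw [hZ₀mem, hsd]
        intro w hw
        have h1 : ω (x : V) w = ω (x : V) (π w) := hdecomp _ x.2 w
        have h2 : (⟨π w, hπV₀ w⟩ : V₀) ∈ Z₀ := (hZ₀mem _).mpr (hπZ w hw)
        obtain ⟨n, hn⟩ := h _ h2
        exact ⟨n, by rw [h1]; exact hn⟩
    -- the sublattice of Z lying in V₀, and a ℤ-basis of it
    set N : Submodule ℤ V := ZS ⊓ (V₀.restrictScalars ℤ) with hNdef
    have hNmem : ∀ v : V, v ∈ N ↔ v ∈ ZS ∧ v ∈ V₀ := fun v => Iff.rfl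
    set N' : Submodule ℤ ZS := N.comap ZS.subtype with hN'def
    obtain ⟨m, c⟩ := Submodule.basisOfPid bZ N'
    set c' : Fin m → V := fun i => ((c i : ZS) : V) with hc'
    have hc'N : ∀ i, c' i ∈ N := fun i => (c i).2
    have hc'ZS : ∀ i, c' i ∈ ZS := fun i => ((hNmem _).mp (hc'N i)).1
    have hc'V₀ : ∀ i, c' i ∈ V₀ := fun i => ((hNmem _).mp (hc'N i)).2
    set J : N' →ₗ[ℤ] V := ZS.subtype.comp N'.subtype with hJ
    have hspanN : Submodule.span ℤ (Set.range c') = N := by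
      apply le_antisymm
      · rw [Submodule.span_le]
        rintro _ ⟨i, rfl⟩
        exact hc'N i
      · intro v hv
        have hvZS : v ∈ ZS := ((hNmem v).mp hv).1
        have hvN' : (⟨v, hvZS⟩ : ZS) ∈ N' := hv
        set u : N' := ⟨⟨v, hvZS⟩, hvN'⟩ with hu
        have hsum := c.sum_repr u
        have hv2 : v = ∑ i, c.repr u i • c' i := by
          calc v = J u := rfl
          _ = J (∑ i, c.repr u i • c i) := by rw [hsum]
          _ = ∑ i, c.repr u i • c' i := by
              rw [map_sum]
              exact Finset.sum_congr rfl fun i _ => by rw [map_smul]; rfl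
        rw [hv2]
        exact Submodule.sum_mem _ fun i _ =>
          Submodule.smul_mem _ _ (Submodule.subset_span ⟨i, rfl⟩)
    have hV₀span : Submodule.span ℝ (Set.range c') = V₀ := by
      apply le_antisymm
      · rw [Submodule.span_le]
        rintro _ ⟨i, rfl⟩
        exact hc'V₀ i
      · intro v hv
        have hπb : ∀ s ∈ Set.range b, π s ∈ Submodule.span ℝ (Set.range c') := by
          rintro _ ⟨i, rfl⟩
          have hbiZ : b i ∈ Z := (hmem _).mpr (Submodule.subset_span ⟨i, rfl⟩)
          have h1 : π (b i) ∈ N := (hNmem _).mpr ⟨(hmem _).mp (hπZ _ hbiZ), hπV₀ _⟩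
          rw [← hspanN] at h1
          exact Submodule.span_le_restrictScalars ℤ ℝ (Set.range c') h1
        have hvV : v ∈ Submodule.span ℝ (Set.range b) := by rw [b.span_eq]; trivial
        have h2 : π v ∈ Submodule.map π (Submodule.span ℝ (Set.range b)) :=
          ⟨v, hvV, rfl⟩
        rw [Submodule.map_span] at h2
        rw [← hπid v hv]
        refine Submodule.span_le.mpr ?_ h2
        rintro _ ⟨s, hs, rfl⟩
        exact hπb s hs
    -- m = 2 * k
    haveI : DecidableEq V := Classical.decEq V
    have hm1 : 2 * k ≤ m := by
      have h1 : Module.finrank ℝ (Submodule.span ℝ (Set.range c')) ≤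
          (Set.range c').toFinset.card := finrank_span_le_card _
      have h2 : (Set.range c').toFinset.card ≤ m := by
        rw [Set.toFinset_range]
        exact le_trans Finset.card_image_le (by simp)
      rw [hV₀span, hdim₀] at h1
      omega
    have hm2 : m ≤ 2 * k := by
      haveI : Module.Finite ℤ ZS := Module.Finite.of_basis bZ
      have hfr : Module.finrank ℤ ZS = 2 * (k + 1) := by
        rw [Module.finrank_eq_card_basis bZ, Fintype.card_fin]
      set q : Fin (m + 2) → ZS :=
        Fin.cons ⟨e, (hmem e).mp heZ⟩
          (Fin.cons ⟨f, (hmem f).mp hfZ⟩ (fun i => ⟨c' i, hc'ZS i⟩)) with hq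
      have hqind : LinearIndependent ℤ q := by
        rw [Fintype.linearIndependent_iff]
        intro t ht
        have htV : ∑ i, t i • ((q i : V)) = 0 := by
          have h := congrArg (Subtype.val) ht
          simpa using h
        -- compute the sum explicitly
        have hsplit : ∑ i, t i • ((q i : V)) =
            t 0 • e + t 1 • f + ∑ i : Fin m, t i.succ.succ • c' i := by
          rw [Fin.sum_univ_succ, Fin.sum_univ_succ]
          simp [hq, add_assoc]
        rw [hsplit] at htV
        -- pair with e and f
        have hc'e : ∀ i, ω e (c' i) = 0 := fun i => ((hV₀ _).mp (hc'V₀ i)).1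
        have hc'f : ∀ i, ω f (c' i) = 0 := fun i => ((hV₀ _).mp (hc'V₀ i)).2
        have ht1 : (t 1 : ℝ) = 0 := by
          have := congrArg (ω e) htV
          simp [map_add, map_sum, halt e, hef, hc'e] at this
          exact_mod_cast this
        have ht0 : (t 0 : ℝ) = 0 := by
          have := congrArg (ω f) htV
          simp [map_add, map_sum, halt f, hfe, hc'f] at this
          exact_mod_cast this
        have ht0' : t 0 = 0 := by exact_mod_cast ht0
        have ht1' : t 1 = 0 := by exact_mod_cast ht1
        have hrest : ∑ i : Fin m, t i.succ.succ • c' i = 0 := by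
          rw [ht0', ht1'] at htV
          simpa using htV
        have hc'ind : LinearIndependent ℤ c' := by
          have hJinj : Function.Injective J := by
            intro a b' hab
            exact Subtype.ext (Subtype.ext hab)
          have := c.linearIndependent.map' J (LinearMap.ker_eq_bot.mpr hJinj)
          exact this
        have hz := Fintype.linearIndependent_iff.mp hc'ind (fun i => t i.succ.succ) hrest
        intro i
        induction i using Fin.cases with
        | zero => exact ht0'
        | succ i =>
          induction i using Fin.cases with
          | zero => exact ht1'
          | succ i => exact hz i
      have := hqind.fintype_card_le_finrank
      rw [hfr, Fintype.card_fin] at this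
      omega
    have hm : m = 2 * k := le_antisymm hm2 hm1
    -- basis of V₀
    set cV : Fin m → V₀ := fun i => ⟨c' i, hc'V₀ i⟩ with hcV
    have htop : ⊤ ≤ Submodule.span ℝ (Set.range cV) := by
      intro x _
      have hx : (x : V) ∈ Submodule.span ℝ (Set.range c') := by
        rw [hV₀span]
        exact x.2
      have hrange : Set.range c' = V₀.subtype '' (Set.range cV) := by
        rw [← Set.range_comp]
        rfl
      rw [hrange, ← Submodule.map_span] at hx
      obtain ⟨y, hy, hxy⟩ := hx
      have : y = x := Subtype.ext hxy
      rwa [← this]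
    have hcard : Fintype.card (Fin m) = Module.finrank ℝ V₀ := by
      rw [Fintype.card_fin, hdim₀, hm]
    set b₀' : Module.Basis (Fin m) ℝ V₀ := basisOfTopLeSpanOfCardEqFinrank cV htop hcard with hb₀'
    set b₀ : Module.Basis (Fin (2 * k)) ℝ V₀ := b₀'.reindex (finCongr hm) with hb₀def
    have hb₀range : Set.range ⇑b₀ = Set.range cV := by
      rw [hb₀def]
      rw [b₀'.range_reindex]
      rw [hb₀']
      rw [coe_basisOfTopLeSpanOfCardEqFinrank]
    have hlat₀ : Z₀ = AddSubgroup.closure (Set.range ⇑b₀) := by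
      have hspli : ∀ x : V₀, x ∈ Submodule.span ℤ (Set.range cV) ↔ (x : V) ∈ N := by
        intro x
        set J₀ : V₀ →ₗ[ℤ] V := (V₀.subtype).restrictScalars ℤ with hJ₀
        have hJ₀inj : Function.Injective J₀ := fun a b' hab => Subtype.ext hab
        constructor
        · intro hx
          have : J₀ x ∈ Submodule.map J₀ (Submodule.span ℤ (Set.range cV)) := ⟨x, hx, rfl⟩
          rw [Submodule.map_span] at this
          have himg : J₀ '' Set.range cV = Set.range c' := by
            rw [← Set.range_comp]
            rfl
          rw [himg, hspanN] at this
          exact this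
        · intro hx
          rw [← hspanN] at hx
          have : (x : V) ∈ Submodule.span ℤ (J₀ '' Set.range cV) := by
            rwa [show J₀ '' Set.range cV = Set.range c' by rw [← Set.range_comp]; rfl]
          rw [← Submodule.map_span] at this
          obtain ⟨y, hy, hxy⟩ := this
          rwa [show y = x from Subtype.ext hxy] at hy
      ext x
      rw [hb₀range, ← Submodule.span_int_eq_addSubgroupClosure, Submodule.mem_toAddSubgroup,
        hspli, hZ₀mem, hmem, hNmem]
      exact ⟨fun h => ⟨h, x.2⟩, fun h => h.1⟩
    -- the isotropic subspace data in V₀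
    have hmain : ∃ (L₀ : Submodule ℝ ↥V₀) (l₀ : ℕ), l₀ ≤ k ∧
        (∀ x ∈ L₀, ∀ y ∈ L₀, ω₀ x y = 0) ∧ Module.finrank ℝ L₀ = l₀ ∧
        Submodule.span ℝ ((Z₀ : Set ↥V₀) ∩ (L₀ : Set ↥V₀)) = L₀ ∧
        ∀ W' : Fin k → ↥V₀, L₀ = Submodule.span ℝ (W' '' {i : Fin k | (i : ℕ) < l₀}) →
          L = Submodule.span ℝ
            ((Fin.cons e (fun i => ((W' i : V))) : Fin (k+1) → V) ''
              {i : Fin (k+1) | (i : ℕ) < l}) := by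
      rcases Nat.eq_zero_or_pos l with hl0 | hl0
      · refine ⟨⊥, 0, Nat.zero_le k, ?_, ?_, ?_, ?_⟩
        · intro x hx y hy
          rw [Submodule.mem_bot] at hx
          simp [hx]
        · exact finrank_bot ℝ ↥V₀
        · apply le_antisymm
          · rw [Submodule.span_le]
            intro x hx
            exact hx.2
          · exact bot_le
        · intro W' _
          have hL : L = ⊥ := by
            rw [hl0] at hLdim
            exact Submodule.finrank_eq_zero.mp hLdim
          have hset : {i : Fin (k+1) | (i : ℕ) < l} = ∅ := by
            ext i
            simp [hl0]
          rw [hL, hset, Set.image_empty, Submodule.span_empty]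
      · have heLmem := heL hl0
        set L₀ : Submodule ℝ ↥V₀ := L.comap V₀.subtype with hL₀def
        have hL₀mem : ∀ x : V₀, x ∈ L₀ ↔ (x : V) ∈ L := fun x => Iff.rfl
        have hL₀dim : Module.finrank ℝ L₀ = l - 1 := by
          set φ : L →ₗ[ℝ] ℝ := (ω f).domRestrict L with hφ
          have hsurj : Function.Surjective φ := by
            intro r
            refine ⟨(-r) • ⟨e, heLmem⟩, ?_⟩
            show ω f ((-r) • e) = r
            rw [map_smul]
            rw [hfe]
            simp
          have hrk := φ.finrank_range_add_finrank_ker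
          rw [LinearMap.range_eq_top.mpr hsurj, finrank_top, hLdim] at hrk
          have h1 : Module.finrank ℝ ℝ = 1 := Module.finrank_self ℝ
          -- equivalence between L₀ and ker φ
          have heqv : Nonempty (L₀ ≃ₗ[ℝ] LinearMap.ker φ) := by
            refine ⟨LinearEquiv.ofBijective
              ({ toFun := fun x => ⟨⟨((x : V₀) : V), (hL₀mem x).mp x.2⟩,
                    LinearMap.mem_ker.mpr (((hV₀ _).mp (x : V₀).2).2)⟩
                 map_add' := fun a b' => rfl
                 map_smul' := fun r a => rfl } : L₀ →ₗ[ℝ] LinearMap.ker φ) ⟨?_, ?_⟩⟩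
            · intro a b' hab
              have h := congrArg (fun t : LinearMap.ker φ => ((t : L) : V)) hab
              exact Subtype.ext (Subtype.ext h)
            · intro y
              have hy1 : ((y : L) : V) ∈ V₀ := by
                rw [hV₀]
                exact ⟨hiso e heLmem _ (y : L).2, LinearMap.mem_ker.mp y.2⟩
              exact ⟨⟨⟨((y : L) : V), hy1⟩, (hL₀mem _).mpr (y : L).2⟩,
                Subtype.ext (Subtype.ext rfl)⟩
          obtain ⟨eqv⟩ := heqv
          have := eqv.finrank_eq
          omega
        refine ⟨L₀, l - 1, by omega, ?_, hL₀dim, ?_, ?_⟩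
        · intro x hx y hy
          exact hiso _ ((hL₀mem x).mp hx) _ ((hL₀mem y).mp hy)
        · apply le_antisymm
          · rw [Submodule.span_le]
            intro x hx
            exact hx.2
          · intro x hx
            have hxL : (x : V) ∈ Submodule.span ℝ ((Z : Set V) ∩ (L : Set V)) := by
              rw [hspan]
              exact (hL₀mem x).mp hx
            have h1 : (x : V) ∈ Submodule.map π (Submodule.span ℝ ((Z : Set V) ∩ L)) :=
              ⟨x, hxL, hπid _ x.2⟩
            rw [Submodule.map_span] at h1
            have h2 : π '' ((Z : Set V) ∩ L) ⊆
                V₀.subtype '' ((Z₀ : Set V₀) ∩ (L₀ : Set V₀)) := by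
              rintro _ ⟨z, ⟨hzZ, hzL⟩, rfl⟩
              have hez : ω e z = 0 := hiso e heLmem z hzL
              obtain ⟨nf, hnf⟩ := hint f hfZ z hzZ
              have hπz : π z = z + (nf : ℝ) • e := by
                rw [hπ, hez, hnf]
                simp
              have hπzL : π z ∈ L := by
                rw [hπz]
                exact L.add_mem hzL (L.smul_mem _ heLmem)
              exact ⟨⟨π z, hπV₀ z⟩, ⟨(hZ₀mem _).mpr (hπZ z hzZ), (hL₀mem _).mpr hπzL⟩, rfl⟩
            have h3 : (x : V) ∈ Submodule.span ℝ
                (V₀.subtype '' ((Z₀ : Set V₀) ∩ (L₀ : Set V₀))) :=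
              Submodule.span_mono h2 h1
            rw [← Submodule.map_span] at h3
            obtain ⟨y, hy, hxy⟩ := h3
            rwa [show y = x from Subtype.ext hxy] at hy
        · intro W' h5
          apply le_antisymm
          · intro x hxL
            have hex : ω e x = 0 := hiso e heLmem x hxL
            have hdx : x = π x - ω f x • e := by
              rw [hπ, hex]
              simp
            have hπxL : π x ∈ L := by
              rw [hπ x, hex]
              simp only [zero_smul, sub_zero]
              exact L.add_mem hxL (L.smul_mem _ heLmem)
            have hπxL₀ : (⟨π x, hπV₀ x⟩ : V₀) ∈ L₀ := (hL₀mem _).mpr hπxL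
            rw [h5] at hπxL₀
            have h6 : π x ∈ Submodule.span ℝ
                (V₀.subtype '' (W' '' {i : Fin k | (i : ℕ) < l - 1})) := by
              rw [← Submodule.map_span]
              exact ⟨_, hπxL₀, rfl⟩
            have h7 : V₀.subtype '' (W' '' {i : Fin k | (i : ℕ) < l - 1}) ⊆
                (Fin.cons e (fun i => ((W' i : V))) : Fin (k+1) → V) ''
                  {i : Fin (k+1) | (i : ℕ) < l} := by
              rintro _ ⟨_, ⟨j, hj, rfl⟩, rfl⟩
              refine ⟨j.succ, ?_, ?_⟩
              · simp only [Set.mem_setOf_eq] at hj ⊢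
                rw [Fin.val_succ]
                omega
              · rw [Fin.cons_succ]
                rfl
            have h8 : π x ∈ Submodule.span ℝ
                ((Fin.cons e (fun i => ((W' i : V))) : Fin (k+1) → V) ''
                  {i : Fin (k+1) | (i : ℕ) < l}) :=
              Submodule.span_mono h7 h6
            have h9 : e ∈ ((Fin.cons e (fun i => ((W' i : V))) : Fin (k+1) → V) ''
                {i : Fin (k+1) | (i : ℕ) < l}) := by
              refine ⟨0, ?_, ?_⟩
              · simp only [Set.mem_setOf_eq, Fin.val_zero]
                omega
              · rw [Fin.cons_zero]
            rw [hdx]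
            exact Submodule.sub_mem _ h8
              (Submodule.smul_mem _ _ (Submodule.subset_span h9))
          · rw [Submodule.span_le]
            rintro _ ⟨i, hi, rfl⟩
            simp only [Set.mem_setOf_eq] at hi
            induction i using Fin.cases with
            | zero =>
              rw [Fin.cons_zero]
              exact heLmem
            | succ j =>
              rw [Fin.cons_succ]
              have hjl : (j : ℕ) < l - 1 := by
                rw [Fin.val_succ] at hi
                omega
              have : W' j ∈ L₀ := by
                rw [h5]
                exact Submodule.subset_span ⟨j, hjl, rfl⟩
              exact (hL₀mem _).mp this
    obtain ⟨L₀, l₀, hl₀, hiso₀, hLdim₀, hspan₀, hLfinal⟩ := hmain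
    obtain ⟨W', Wp', h1, h2, h3, h4, h5⟩ :=
      IH ↥V₀ hdim₀ ω₀ halt₀ hnd₀ Z₀ ⟨b₀, hlat₀⟩ hsd₀ L₀ l₀ hl₀ hiso₀ hLdim₀ hspan₀
    set W : Fin (k+1) → V := Fin.cons e (fun i => ((W' i : V))) with hW
    set Wp : Fin (k+1) → V := Fin.cons f (fun i => ((Wp' i : V))) with hWp
    have hWe : ∀ i, ω e ((W' i : V)) = 0 := fun i => ((hV₀ _).mp (W' i).2).1
    have hWf : ∀ i, ω f ((W' i : V)) = 0 := fun i => ((hV₀ _).mp (W' i).2).2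
    have hWpe : ∀ i, ω e ((Wp' i : V)) = 0 := fun i => ((hV₀ _).mp (Wp' i).2).1
    have hWpf : ∀ i, ω f ((Wp' i : V)) = 0 := fun i => ((hV₀ _).mp (Wp' i).2).2
    refine ⟨W, Wp, ?_, ?_, ?_, ?_, ?_⟩
    · intro i j
      induction i using Fin.cases with
      | zero =>
        induction j using Fin.cases with
        | zero => simpa [hW, hWp] using hef
        | succ j => simp [hW, hWp, hWpe j, (Fin.succ_ne_zero j).symm]
      | succ i =>
        induction j using Fin.cases with
        | zero =>
          have h0 : ω ((W' i : V)) f = 0 := by rw [hskew, hWf i, neg_zero]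
          simp [hW, hWp, h0, Fin.succ_ne_zero i]
        | succ j =>
          have := h1 i j
          rw [hω₀app] at this
          simp only [hW, hWp, Fin.cons_succ, Fin.succ_inj]
          exact this
    · intro i j
      induction i using Fin.cases with
      | zero =>
        induction j using Fin.cases with
        | zero => simp [hW, halt e]
        | succ j => simp [hW, hWe j]
      | succ i =>
        induction j using Fin.cases with
        | zero =>
          have h0 : ω ((W' i : V)) e = 0 := by rw [hskew, hWe i, neg_zero]
          simp [hW, h0]
        | succ j =>
          have := h2 i j
          rw [hω₀app] at this
          simp only [hW, Fin.cons_succ]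
          exact this
    · intro i j
      induction i using Fin.cases with
      | zero =>
        induction j using Fin.cases with
        | zero => simp [hWp, halt f]
        | succ j => simp [hWp, hWpf j]
      | succ i =>
        induction j using Fin.cases with
        | zero =>
          have h0 : ω ((Wp' i : V)) f = 0 := by rw [hskew, hWpf i, neg_zero]
          simp [hWp, h0]
        | succ j =>
          have := h3 i j
          rw [hω₀app] at this
          simp only [hWp, Fin.cons_succ]
          exact this
    · have heW : e ∈ Set.range W ∪ Set.range Wp := Or.inl ⟨0, Fin.cons_zero _ _⟩
      have hfW : f ∈ Set.range W ∪ Set.range Wp := Or.inr ⟨0, Fin.cons_zero _ _⟩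
      apply le_antisymm
      · intro z hz
        obtain ⟨nf, hnf⟩ := hint f hfZ z hz
        obtain ⟨ne', hne⟩ := hint e heZ z hz
        have hdz : z = π z - nf • e + ne' • f := by
          rw [hπ, hne, hnf, Int.cast_smul_eq_zsmul ℝ nf e, Int.cast_smul_eq_zsmul ℝ ne' f]
          abel
        have hπzZ₀ : (⟨π z, hπV₀ z⟩ : V₀) ∈ Z₀ := (hZ₀mem _).mpr (hπZ z hz)
        rw [h4] at hπzZ₀
        have hπzmem : π z ∈ AddSubgroup.closure (Set.range W ∪ Set.range Wp) := by
          have himg : π z ∈ (AddSubgroup.closure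
              (Set.range W' ∪ Set.range Wp')).map V₀.subtype.toAddMonoidHom :=
            ⟨_, hπzZ₀, rfl⟩
          rw [AddMonoidHom.map_closure] at himg
          refine AddSubgroup.closure_mono ?_ himg
          rintro _ ⟨y, hy, rfl⟩
          rcases hy with ⟨i, rfl⟩ | ⟨i, rfl⟩
          · exact Or.inl ⟨i.succ, Fin.cons_succ _ _ _⟩
          · exact Or.inr ⟨i.succ, Fin.cons_succ _ _ _⟩
        rw [hdz]
        exact AddSubgroup.add_mem _
          (AddSubgroup.sub_mem _ hπzmem
            (AddSubgroup.zsmul_mem _ (AddSubgroup.subset_closure heW) nf))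
          (AddSubgroup.zsmul_mem _ (AddSubgroup.subset_closure hfW) ne')
      · rw [AddSubgroup.closure_le]
        rintro x (⟨i, rfl⟩ | ⟨i, rfl⟩)
        · induction i using Fin.cases with
          | zero =>
            rw [SetLike.mem_coe, hW, Fin.cons_zero]
            exact heZ
          | succ j =>
            rw [SetLike.mem_coe, hW, Fin.cons_succ]
            have hj : W' j ∈ Z₀ := by
              rw [h4]
              exact AddSubgroup.subset_closure (Or.inl ⟨j, rfl⟩)
            exact (hZ₀mem _).mp hj
        · induction i using Fin.cases with
          | zero =>
            rw [SetLike.mem_coe, hWp, Fin.cons_zero]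
            exact hfZ
          | succ j =>
            rw [SetLike.mem_coe, hWp, Fin.cons_succ]
            have hj : Wp' j ∈ Z₀ := by
              rw [h4]
              exact AddSubgroup.subset_closure (Or.inr ⟨j, rfl⟩)
            exact (hZ₀mem _).mp hj
    · exact hLfinal W' h5


/-- Adapted integral symplectic basis for a self-dual lattice and a
rational isotropic subspace: if `Z` is a self-dual lattice in the `2g`-dimensional
symplectic space `(V, ω)` and `L` an isotropic subspace of dimension `l ≤ g` spanned
over `ℝ` by `Z ∩ L`, there is a symplectic basis `(W₁,…,W_g; W₁^⊥,…,W_g^⊥)` generating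
`Z` over `ℤ` such that `L = ℝW₁ ⊕ ⋯ ⊕ ℝW_l`. -/
theorem stmt_10 (g : ℕ) (V : Type*) [AddCommGroup V] [Module ℝ V] [FiniteDimensional ℝ V]
    (hdim : Module.finrank ℝ V = 2 * g)
    (ω : V →ₗ[ℝ] V →ₗ[ℝ] ℝ) (halt : ∀ v : V, ω v v = 0)
    (hnd : ∀ v : V, (∀ w : V, ω v w = 0) → v = 0)
    (Z : AddSubgroup V)
    (hlat : ∃ b : Module.Basis (Fin (2 * g)) ℝ V, Z = AddSubgroup.closure (Set.range b))
    (hsd : ∀ x : V, x ∈ Z ↔ ∀ w ∈ Z, ∃ n : ℤ, ω x w = (n : ℝ))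
    (L : Submodule ℝ V) (l : ℕ) (hl : l ≤ g)
    (hiso : ∀ x ∈ L, ∀ y ∈ L, ω x y = 0)
    (hLdim : Module.finrank ℝ L = l)
    (hspan : Submodule.span ℝ ((Z : Set V) ∩ (L : Set V)) = L) :
    ∃ W Wp : Fin g → V,
      (∀ i j, ω (W i) (Wp j) = if i = j then 1 else 0) ∧
      (∀ i j, ω (W i) (W j) = 0) ∧
      (∀ i j, ω (Wp i) (Wp j) = 0) ∧
      Z = AddSubgroup.closure (Set.range W ∪ Set.range Wp) ∧
      L = Submodule.span ℝ (W '' {i : Fin g | (i : ℕ) < l}) := by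
  exact stmt10_aux g V hdim ω halt hnd Z hlat hsd L l hl hiso hLdim hspan
end

section
/- Let ω(2,1), ω(3,2), ω(3,1) be nonsingular g×g integer matrices arising from three pairwise transverse rational Lagrangian subspaces (so in particular suitable products are symmetric as in Lemma on symmetry), and set Q = |det ω(2,1) det ω(3,2)| · ω(3,2)^{-1} ω(3,1) ω(2,1)^{-1}. Then Q is a symmetric matrix with integer entries and det Q ≠ 0, and Q^{-1} = −H / |det ω(2,1) det ω(3,2)| where H = −ω(2,1)ω(3,1)^{-1}ω(3,2); consequently sgn Q = −sgn H. -/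
/-- The signature of the quadratic form `x ↦ xᵀ M x` of a rational symmetric matrix. -/
noncomputable def matSig {g : ℕ} (M : Matrix (Fin g) (Fin g) ℚ) : ℤ :=
  qSignature (fun x : Fin g → ℝ => ∑ i, ∑ j, x i * (M i j : ℝ) * x j)

open Matrix

lemma posIdx_comp {W : Type*} [AddCommGroup W] [Module ℝ W]
    (q : W → ℝ) (e : W ≃ₗ[ℝ] W) : posIdx (fun x => q (e x)) = posIdx q := by
  unfold posIdx
  congr 1
  ext n
  constructor
  · rintro ⟨U, hU, hpos⟩
    refine ⟨U.map (e : W →ₗ[ℝ] W), by rw [LinearEquiv.finrank_map_eq]; exact hU, ?_⟩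
    rintro x hx hx0
    rcases Submodule.mem_map.mp hx with ⟨y, hy, rfl⟩
    have hy0 : y ≠ 0 := by rintro rfl; simp at hx0
    exact hpos y hy hy0
  · rintro ⟨U, hU, hpos⟩
    refine ⟨U.map (e.symm : W →ₗ[ℝ] W),
      by rw [LinearEquiv.finrank_map_eq]; exact hU, ?_⟩
    rintro x hx hx0
    rcases Submodule.mem_map.mp hx with ⟨y, hy, rfl⟩
    have hy0 : y ≠ 0 := by rintro rfl; simp at hx0
    have h := hpos y hy hy0
    simpa using h

lemma posIdx_congr {W : Type*} [AddCommGroup W] [Module ℝ W]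
    {q q' : W → ℝ} (h : ∀ x, q x = q' x) : posIdx q = posIdx q' := by
  have : q = q' := funext h
  rw [this]

lemma posIdx_smul {W : Type*} [AddCommGroup W] [Module ℝ W]
    (c : ℝ) (hc : 0 < c) (q : W → ℝ) :
    posIdx (fun x => c * q x) = posIdx q := by
  unfold posIdx
  congr 1
  ext n
  constructor
  · rintro ⟨U, hU, hpos⟩
    exact ⟨U, hU, fun x hx h0 => (mul_pos_iff_of_pos_left hc).mp (hpos x hx h0)⟩
  · rintro ⟨U, hU, hpos⟩
    exact ⟨U, hU, fun x hx h0 => (mul_pos_iff_of_pos_left hc).mpr (hpos x hx h0)⟩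

lemma qSignature_comp {W : Type*} [AddCommGroup W] [Module ℝ W]
    (q : W → ℝ) (e : W ≃ₗ[ℝ] W) : qSignature (fun x => q (e x)) = qSignature q := by
  unfold qSignature
  rw [posIdx_comp q e, posIdx_comp (fun x => -q x) e]

lemma qSignature_congr {W : Type*} [AddCommGroup W] [Module ℝ W]
    {q q' : W → ℝ} (h : ∀ x, q x = q' x) : qSignature q = qSignature q' := by
  have : q = q' := funext h
  rw [this]

lemma qSignature_smul {W : Type*} [AddCommGroup W] [Module ℝ W]
    (c : ℝ) (hc : 0 < c) (q : W → ℝ) :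
    qSignature (fun x => c * q x) = qSignature q := by
  unfold qSignature
  rw [posIdx_smul c hc q]
  congr 2
  rw [posIdx_congr (q' := fun x => c * (-q x)) (fun x => by ring), posIdx_smul c hc]

lemma qSignature_neg {W : Type*} [AddCommGroup W] [Module ℝ W] (q : W → ℝ) :
    qSignature (fun x => -q x) = -qSignature q := by
  unfold qSignature
  rw [posIdx_congr (q := fun x => - -q x) (q' := q) (fun x => by ring)]
  ring

/-- the quadratic form of a rational matrix, over ℝ -/
noncomputable def qform {g : ℕ} (M : Matrix (Fin g) (Fin g) ℚ) : (Fin g → ℝ) → ℝ :=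
  fun x => x ⬝ᵥ (M.map (Rat.cast : ℚ → ℝ)).mulVec x

lemma matSig_eq {g : ℕ} (M : Matrix (Fin g) (Fin g) ℚ) :
    matSig M = qSignature (qform M) := by
  unfold matSig
  apply qSignature_congr
  intro x
  simp only [qform, dotProduct, mulVec, Matrix.map_apply, Finset.mul_sum]
  exact Finset.sum_congr rfl fun i _ => Finset.sum_congr rfl fun j _ => by ring

lemma matSig_neg {g : ℕ} (M : Matrix (Fin g) (Fin g) ℚ) :
    matSig (-M) = -matSig M := by
  unfold matSig
  have h : (fun x : Fin g → ℝ => ∑ i, ∑ j, x i * ((-M) i j : ℝ) * x j)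
      = fun x : Fin g → ℝ => -∑ i, ∑ j, x i * (M i j : ℝ) * x j := by
    funext x
    rw [← Finset.sum_neg_distrib]
    refine Finset.sum_congr rfl fun i _ => ?_
    rw [← Finset.sum_neg_distrib]
    refine Finset.sum_congr rfl fun j _ => ?_
    simp only [Matrix.neg_apply]
    push_cast
    ring
  rw [h, qSignature_neg]

lemma matSig_smul {g : ℕ} (c : ℚ) (hc : 0 < c) (M : Matrix (Fin g) (Fin g) ℚ) :
    matSig (c • M) = matSig M := by
  unfold matSig
  have h : (fun x : Fin g → ℝ => ∑ i, ∑ j, x i * ((c • M) i j : ℝ) * x j)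
      = fun x : Fin g → ℝ => (c : ℝ) * ∑ i, ∑ j, x i * (M i j : ℝ) * x j := by
    funext x
    rw [Finset.mul_sum]
    refine Finset.sum_congr rfl fun i _ => ?_
    rw [Finset.mul_sum]
    refine Finset.sum_congr rfl fun j _ => ?_
    simp only [Matrix.smul_apply, smul_eq_mul]
    push_cast
    ring
  rw [h]
  exact qSignature_smul _ (by exact_mod_cast hc) _

/-- linear equivalence given by an invertible real matrix -/
noncomputable def mulVecEquiv {g : ℕ} (T : Matrix (Fin g) (Fin g) ℝ) (h : T.det ≠ 0) :
    (Fin g → ℝ) ≃ₗ[ℝ] (Fin g → ℝ) :=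
  LinearEquiv.ofLinear T.mulVecLin T⁻¹.mulVecLin
    (by rw [← Matrix.mulVecLin_mul, Matrix.mul_nonsing_inv _ (isUnit_iff_ne_zero.mpr h),
      Matrix.mulVecLin_one])
    (by rw [← Matrix.mulVecLin_mul, Matrix.nonsing_inv_mul _ (isUnit_iff_ne_zero.mpr h),
      Matrix.mulVecLin_one])

lemma matSig_inv {g : ℕ} (S : Matrix (Fin g) (Fin g) ℚ) (hS : S.det ≠ 0) :
    matSig S⁻¹ = matSig S := by
  have hmm : S.map (Rat.cast : ℚ → ℝ) = S.map (⇑(Rat.castHom ℝ)) := rfl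
  have hmapdet : (S.map (Rat.cast : ℚ → ℝ)).det = (S.det : ℝ) := by
    rw [hmm, ← RingHom.mapMatrix_apply, ← RingHom.map_det]; rfl
  set T : Matrix (Fin g) (Fin g) ℝ := S.map (Rat.cast : ℚ → ℝ) with hT
  have hTdet : T.det ≠ 0 := by rw [hmapdet]; exact_mod_cast hS
  have hmul : S * S⁻¹ = 1 := Matrix.mul_nonsing_inv _ (isUnit_iff_ne_zero.mpr hS)
  have hmap : (S⁻¹).map (Rat.cast : ℚ → ℝ) = T⁻¹ := by
    refine (Matrix.inv_eq_right_inv ?_).symm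
    have h2 := congrArg (Matrix.map · (⇑(Rat.castHom ℝ))) hmul
    simp only [Matrix.map_mul (f := Rat.castHom ℝ)] at h2
    have h3 : (1 : Matrix (Fin g) (Fin g) ℚ).map (⇑(Rat.castHom ℝ)) = 1 := by
      ext i j
      by_cases hij : i = j <;> simp [Matrix.one_apply, hij]
    rw [h3] at h2
    exact h2
  rw [matSig_eq, matSig_eq]
  set e := mulVecEquiv T hTdet with he
  rw [← qSignature_comp (qform S) e.symm]
  apply qSignature_congr
  intro x
  have hesymm : (e.symm : (Fin g → ℝ) → (Fin g → ℝ)) x = T⁻¹.mulVec x := rfl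
  simp only [qform, hmap, hesymm]
  rw [Matrix.mulVec_mulVec, ← hT, Matrix.mul_nonsing_inv _ (isUnit_iff_ne_zero.mpr hTdet),
    Matrix.one_mulVec, dotProduct_comm]

/-- For nonsingular integer matrices `ω(2,1)`, `ω(3,2)`, `ω(3,1)` coming
from three pairwise transverse rational Lagrangians (so that `ω(3,2)⁻¹ω(3,1)ω(2,1)⁻¹` is
symmetric), the matrix `Q = |det ω(2,1) det ω(3,2)| · ω(3,2)⁻¹ω(3,1)ω(2,1)⁻¹` is symmetric
with integer entries and nonzero determinant,
`Q⁻¹ = −H / |det ω(2,1) det ω(3,2)|` where `H = −ω(2,1)ω(3,1)⁻¹ω(3,2)`, and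
`sgn Q = −sgn H`. -/
theorem stmt_18 (g : ℕ) (w21 w32 w31 : Matrix (Fin g) (Fin g) ℤ)
    (h21 : w21.det ≠ 0) (h32 : w32.det ≠ 0) (h31 : w31.det ≠ 0)
    (hsymm : ((w32.map (Int.cast : ℤ → ℚ))⁻¹ * (w31.map (Int.cast : ℤ → ℚ))
        * (w21.map (Int.cast : ℤ → ℚ))⁻¹).IsSymm) :
    (∀ i j, ∃ z : ℤ,
        ((|(w21.det * w32.det : ℤ)| : ℚ)
          • ((w32.map (Int.cast : ℤ → ℚ))⁻¹ * (w31.map (Int.cast : ℤ → ℚ))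
            * (w21.map (Int.cast : ℤ → ℚ))⁻¹)) i j = (z : ℚ)) ∧
    ((|(w21.det * w32.det : ℤ)| : ℚ)
        • ((w32.map (Int.cast : ℤ → ℚ))⁻¹ * (w31.map (Int.cast : ℤ → ℚ))
          * (w21.map (Int.cast : ℤ → ℚ))⁻¹)).IsSymm ∧
    ((|(w21.det * w32.det : ℤ)| : ℚ)
        • ((w32.map (Int.cast : ℤ → ℚ))⁻¹ * (w31.map (Int.cast : ℤ → ℚ))
          * (w21.map (Int.cast : ℤ → ℚ))⁻¹)).det ≠ 0 ∧
    ((|(w21.det * w32.det : ℤ)| : ℚ)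
        • ((w32.map (Int.cast : ℤ → ℚ))⁻¹ * (w31.map (Int.cast : ℤ → ℚ))
          * (w21.map (Int.cast : ℤ → ℚ))⁻¹))⁻¹
      = (-(|(w21.det * w32.det : ℤ)| : ℚ)⁻¹)
        • (-((w21.map (Int.cast : ℤ → ℚ)) * (w31.map (Int.cast : ℤ → ℚ))⁻¹
          * (w32.map (Int.cast : ℤ → ℚ)))) ∧
    matSig ((|(w21.det * w32.det : ℤ)| : ℚ)
        • ((w32.map (Int.cast : ℤ → ℚ))⁻¹ * (w31.map (Int.cast : ℤ → ℚ))
          * (w21.map (Int.cast : ℤ → ℚ))⁻¹))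
      = - matSig (-((w21.map (Int.cast : ℤ → ℚ)) * (w31.map (Int.cast : ℤ → ℚ))⁻¹
          * (w32.map (Int.cast : ℤ → ℚ)))) := by
  have hcoe : (Int.cast : ℤ → ℚ) = ⇑(Int.castRingHom ℚ) := rfl
  set A := w21.map (Int.cast : ℤ → ℚ) with hA
  set B := w32.map (Int.cast : ℤ → ℚ) with hB
  set C := w31.map (Int.cast : ℤ → ℚ) with hC
  set d := w21.det * w32.det with hdd
  have hd : d ≠ 0 := mul_ne_zero h21 h32
  have hAd : A.det = (w21.det : ℚ) := by
    rw [hA, hcoe, ← RingHom.mapMatrix_apply, ← RingHom.map_det]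
  have hBd : B.det = (w32.det : ℚ) := by
    rw [hB, hcoe, ← RingHom.mapMatrix_apply, ← RingHom.map_det]
  have hCd : C.det = (w31.det : ℚ) := by
    rw [hC, hcoe, ← RingHom.mapMatrix_apply, ← RingHom.map_det]
  have uA : IsUnit A.det := isUnit_iff_ne_zero.mpr (by rw [hAd]; exact_mod_cast h21)
  have uB : IsUnit B.det := isUnit_iff_ne_zero.mpr (by rw [hBd]; exact_mod_cast h32)
  have uC : IsUnit C.det := isUnit_iff_ne_zero.mpr (by rw [hCd]; exact_mod_cast h31)
  set S := B⁻¹ * C * A⁻¹ with hS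
  set c : ℚ := |((d : ℤ) : ℚ)| with hcc
  have hdq : ((d : ℤ) : ℚ) ≠ 0 := Int.cast_ne_zero.mpr hd
  have hc : 0 < c := by rw [hcc]; exact abs_pos.mpr hdq
  have key1 : S * (A * C⁻¹ * B) = 1 := by
    rw [hS]
    simp only [Matrix.mul_assoc]
    rw [Matrix.nonsing_inv_mul_cancel_left _ _ uA, Matrix.mul_nonsing_inv_cancel_left _ _ uC,
      Matrix.nonsing_inv_mul _ uB]
  have hSinv : S⁻¹ = A * C⁻¹ * B := Matrix.inv_eq_right_inv key1
  have hSdet : S.det ≠ 0 := by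
    intro h0
    have hh := congrArg Matrix.det key1
    rw [Matrix.det_mul, h0, zero_mul, Matrix.det_one] at hh
    exact zero_ne_one hh
  have hQR : (c • S) * ((c⁻¹ : ℚ) • (A * C⁻¹ * B)) = 1 := by
    rw [Matrix.smul_mul, Matrix.mul_smul, smul_smul, key1,
      mul_inv_cancel₀ hc.ne', one_smul]
  -- the explicit integer form of Q
  set N₀ : Matrix (Fin g) (Fin g) ℤ := w32.adjugate * w31 * w21.adjugate with hN₀
  have hadj : B.adjugate * C * A.adjugate = N₀.map (Int.cast : ℤ → ℚ) := by
    have e1 : B.adjugate = (w32.adjugate).map (Int.cast : ℤ → ℚ) := by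
      rw [hB, hcoe, ← RingHom.mapMatrix_apply, ← RingHom.map_adjugate,
        RingHom.mapMatrix_apply]
    have e2 : A.adjugate = (w21.adjugate).map (Int.cast : ℤ → ℚ) := by
      rw [hA, hcoe, ← RingHom.mapMatrix_apply, ← RingHom.map_adjugate,
        RingHom.mapMatrix_apply]
    rw [hN₀, e1, e2, hC, hcoe, Matrix.map_mul, Matrix.map_mul]
  have hsd : (d.sign : ℚ) * ((w32.det : ℚ) * (w21.det : ℚ)) = c := by
    rw [hcc, ← Int.cast_abs]
    have : d.sign * (w32.det * w21.det) = |d| := by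
      rcases lt_trichotomy d 0 with h | h | h
      · rw [Int.sign_eq_neg_one_iff_neg.mpr h, abs_of_neg h, hdd]; ring
      · exact absurd h hd
      · rw [Int.sign_eq_one_iff_pos.mpr h, abs_of_pos h, hdd]; ring
    exact_mod_cast congrArg (Int.cast : ℤ → ℚ) this
  have hQform : c • S = ((d.sign : ℤ) : ℚ) • (N₀.map (Int.cast : ℤ → ℚ)) := by
    have hBinv : B⁻¹ = (B.det)⁻¹ • B.adjugate := by
      rw [Matrix.inv_def, Ring.inverse_eq_inv]
    have hAinv : A⁻¹ = (A.det)⁻¹ • A.adjugate := by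
      rw [Matrix.inv_def, Ring.inverse_eq_inv]
    rw [hS, hBinv, hAinv, Matrix.smul_mul, Matrix.smul_mul, Matrix.mul_smul,
      smul_smul, smul_smul, hadj, hAd, hBd]
    congr 1
    have h32q : (w32.det : ℚ) ≠ 0 := Int.cast_ne_zero.mpr h32
    have h21q : (w21.det : ℚ) ≠ 0 := Int.cast_ne_zero.mpr h21
    field_simp
    linear_combination -hsd
  refine ⟨?_, ?_, ?_, ?_, ?_⟩
  · intro i j
    refine ⟨d.sign * N₀ i j, ?_⟩
    rw [hQform]
    simp only [Matrix.smul_apply, Matrix.map_apply, smul_eq_mul]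
    push_cast
    ring
  · show (c • S).IsSymm
    unfold Matrix.IsSymm
    rw [Matrix.transpose_smul, hsymm]
  · intro h0
    have hh := congrArg Matrix.det hQR
    rw [Matrix.det_mul, h0, zero_mul, Matrix.det_one] at hh
    exact zero_ne_one hh
  · rw [smul_neg, neg_smul, neg_neg]
    exact Matrix.inv_eq_right_inv hQR
  · calc matSig (c • S) = matSig S := matSig_smul c hc S
      _ = matSig S⁻¹ := (matSig_inv S hSdet).symm
      _ = - matSig (-(S⁻¹)) := by rw [matSig_neg]; ring
      _ = - matSig (-(A * C⁻¹ * B)) := by rw [hSinv]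
end
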